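/- arXiv:1301.1365 — 4 statements merged into one kernel-verified Lean document; each statement's English description precedes it below -/
import Mathlib

section
/- Let S(t) be the unique formal power series over ℝ with zero constant term satisfying S = t(1+2S)(1+S), and let ρ = 3 − √8. For every real t with 0 < t < ρ, the power series S converges at t and S(t) = (1 − 3t − √(1 − 6t + t²))/(4t). -/
/-!
STATEMENT 2: Let `S` be the unique formal power series over `ℝ` with zero constant
term satisfying `S = t(1+2S)(1+S)`, and `ρ = 3 - √8`. For `0 < t < ρ`, the series
`S` converges at `t` and its sum is `(1 - 3t - √(1 - 6t + t²)) / (4t)`.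
-/

open PowerSeries Finset in
private lemma halfAnimal_rec (S : PowerSeries ℝ)
    (hS : S = X * (1 + 2 * S) * (1 + S)) (n : ℕ) :
    coeff (n+1) S = (if n = 0 then (1:ℝ) else 0) + 3 * coeff n S
      + 2 * ∑ p ∈ Finset.HasAntidiagonal.antidiagonal n, coeff p.1 S * coeff p.2 S := by
  conv_lhs => rw [hS]
  have : X * (1 + 2 * S) * (1 + S) = X * (1 + C 3 * S + C 2 * (S * S)) := by
    simp [C_eq_algebraMap, map_ofNat]; ring
  rw [this, coeff_succ_X_mul, map_add, map_add, coeff_one, coeff_C_mul, coeff_C_mul,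
    coeff_mul, mul_sum]

open PowerSeries Finset in
private lemma halfAnimal_nonneg (S : PowerSeries ℝ)
    (hS0 : constantCoeff S = 0)
    (hS : S = X * (1 + 2 * S) * (1 + S)) (n : ℕ) :
    0 ≤ coeff n S := by
  induction n using Nat.strong_induction_on with
  | _ n ih =>
    match n with
    | 0 => simp [coeff_zero_eq_constantCoeff, hS0]
    | Nat.succ m =>
      rw [halfAnimal_rec S hS m]
      have h1 : (0:ℝ) ≤ ∑ p ∈ Finset.HasAntidiagonal.antidiagonal m, coeff p.1 S * coeff p.2 S := by
        apply Finset.sum_nonneg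
        intro p hp
        rw [Finset.HasAntidiagonal.mem_antidiagonal] at hp
        exact mul_nonneg (ih p.1 (by omega)) (ih p.2 (by omega))
      have h2 : (0:ℝ) ≤ coeff m S := ih m (by omega)
      positivity

open Finset in
private lemma halfAnimal_cauchy_partial (f : ℕ → ℝ) (hf : ∀ i, 0 ≤ f i) (n : ℕ) :
    ∑ k ∈ range n, ∑ p ∈ Finset.HasAntidiagonal.antidiagonal k, f p.1 * f p.2
      ≤ (∑ i ∈ range n, f i)^2 := by
  have hdisj : (↑(range n) : Set ℕ).PairwiseDisjoint Finset.HasAntidiagonal.antidiagonal := by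
    intro i _ j _ hij
    simp only [Finset.disjoint_left]
    intro p hp hq
    rw [Finset.HasAntidiagonal.mem_antidiagonal] at hp hq
    omega
  rw [← Finset.sum_biUnion hdisj]
  have hsq : (∑ i ∈ range n, f i)^2 = ∑ p ∈ (range n) ×ˢ (range n), f p.1 * f p.2 := by
    rw [sq, Finset.sum_mul_sum, Finset.sum_product]
  rw [hsq]
  apply Finset.sum_le_sum_of_subset_of_nonneg
  · intro p hp
    simp only [Finset.mem_biUnion, Finset.mem_range] at hp
    obtain ⟨k, hk, hpk⟩ := hp
    rw [Finset.HasAntidiagonal.mem_antidiagonal] at hpk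
    simp only [Finset.mem_product, Finset.mem_range]
    omega
  · intro p _ _
    exact mul_nonneg (hf _) (hf _)

open Finset in
open PowerSeries in
theorem halfAnimalGF_sum_formula (S : PowerSeries ℝ)
    (hS0 : constantCoeff S = 0)
    (hS : S = X * (1 + 2 * S) * (1 + S)) :
    ∀ t : ℝ, 0 < t → t < 3 - Real.sqrt 8 →
      Summable (fun n : ℕ => coeff n S * t ^ n) ∧
      ∑' n : ℕ, coeff n S * t ^ n
        = (1 - 3 * t - Real.sqrt (1 - 6 * t + t ^ 2)) / (4 * t) := by
  intro t ht hts
  set a : ℕ → ℝ := fun n => coeff n S with ha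
  have ha0 : a 0 = 0 := by simp [ha, coeff_zero_eq_constantCoeff, hS0]
  have hanneg : ∀ n, 0 ≤ a n := halfAnimal_nonneg S hS0 hS
  have harec : ∀ n, a (n+1) = (if n = 0 then (1:ℝ) else 0) + 3 * a n
      + 2 * ∑ p ∈ Finset.HasAntidiagonal.antidiagonal n, a p.1 * a p.2 := halfAnimal_rec S hS
  -- basic numeric facts
  have h8 : Real.sqrt 8 ^ 2 = 8 := Real.sq_sqrt (by norm_num)
  have h8' : 0 ≤ Real.sqrt 8 := Real.sqrt_nonneg 8
  have ht3 : 3 * t < 1 := by nlinarith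
  have hD : 0 < 1 - 6 * t + t ^ 2 := by nlinarith
  set s := Real.sqrt (1 - 6 * t + t ^ 2) with hs
  have hsq : s ^ 2 = 1 - 6 * t + t ^ 2 := Real.sq_sqrt hD.le
  have hs0 : 0 < s := Real.sqrt_pos.mpr hD
  have hsle : s < 1 - 3 * t := by nlinarith
  set L : ℝ := (1 - 3 * t - s) / (4 * t) with hL
  have hL4 : 4 * t * L = 1 - 3 * t - s := by
    rw [hL]; field_simp
  have hL0 : 0 ≤ L := by
    apply div_nonneg (by linarith) (by linarith)
  have hLeq : t * (1 + 2 * L) * (1 + L) = L := by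
    have h4 : (4:ℝ) * t ≠ 0 := by positivity
    field_simp [hL]
    nlinarith [hsq]
  -- partial sums bounded by L
  set f : ℕ → ℝ := fun n => a n * t ^ n with hf
  have hfnneg : ∀ n, 0 ≤ f n := fun n => mul_nonneg (hanneg n) (pow_nonneg ht.le n)
  have hkey : ∀ n, ∑ i ∈ range n, f i ≤ L := by
    intro n
    induction n with
    | zero => simpa using hL0
    | succ n ihn =>
      rw [Finset.sum_range_succ']
      have hf0 : f 0 = 0 := by simp [hf, ha0]
      rw [hf0, add_zero]
      have hstep : ∀ k, f (k+1) = t * ((if k = 0 then (1:ℝ) else 0) * t ^ k)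
          + 3 * t * f k + 2 * t * ((∑ p ∈ Finset.HasAntidiagonal.antidiagonal k, a p.1 * a p.2) * t ^ k) := by
        intro k
        simp only [hf, harec k, pow_succ]
        ring
      calc ∑ i ∈ range n, f (i+1)
          = t * (∑ k ∈ range n, (if k = 0 then (1:ℝ) else 0) * t ^ k)
            + 3 * t * (∑ k ∈ range n, f k)
            + 2 * t * (∑ k ∈ range n, (∑ p ∈ Finset.HasAntidiagonal.antidiagonal k, a p.1 * a p.2) * t ^ k) := by
            simp only [hstep, Finset.sum_add_distrib, Finset.mul_sum]
        _ ≤ t * 1 + 3 * t * L + 2 * t * L ^ 2 := by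
            have e1 : ∑ k ∈ range n, (if k = 0 then (1:ℝ) else 0) * t ^ k ≤ 1 := by
              rcases Nat.eq_zero_or_pos n with h | h
              · simp [h]
              · rw [Finset.sum_eq_single 0]
                · simp
                · intro b _ hb; simp [hb]
                · intro h0; exact absurd (Finset.mem_range.mpr h) h0
            have e3 : ∑ k ∈ range n, (∑ p ∈ Finset.HasAntidiagonal.antidiagonal k, a p.1 * a p.2) * t ^ k
                ≤ L ^ 2 := by
              have heq : ∀ k ∈ range n, (∑ p ∈ Finset.HasAntidiagonal.antidiagonal k, a p.1 * a p.2) * t ^ k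
                  = ∑ p ∈ Finset.HasAntidiagonal.antidiagonal k, f p.1 * f p.2 := by
                intro k _
                rw [Finset.sum_mul]
                apply Finset.sum_congr rfl
                intro p hp
                rw [Finset.HasAntidiagonal.mem_antidiagonal] at hp
                simp only [hf, ← hp, pow_add]
                ring
              rw [Finset.sum_congr rfl heq]
              calc ∑ k ∈ range n, ∑ p ∈ Finset.HasAntidiagonal.antidiagonal k, f p.1 * f p.2
                  ≤ (∑ i ∈ range n, f i)^2 := halfAnimal_cauchy_partial f hfnneg n
                _ ≤ L ^ 2 :=
                    pow_le_pow_left₀ (Finset.sum_nonneg fun i _ => hfnneg i) ihn 2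
            have e2 := ihn
            nlinarith [Finset.sum_nonneg (fun i (_ : i ∈ range n) => hfnneg i)]
        _ = L := by nlinarith [hLeq]
  have hsum : Summable f := summable_of_sum_range_le hfnneg hkey
  refine ⟨hsum, ?_⟩
  set F : ℝ := ∑' n, f n with hF
  have hFle : F ≤ L := Summable.tsum_le_of_sum_range_le hsum hkey
  -- Cauchy product summability
  have hnorm : Summable fun n => ‖f n‖ := summable_norm_iff.mpr hsum
  have hcs : Summable fun n => ∑ p ∈ Finset.HasAntidiagonal.antidiagonal n, f p.1 * f p.2 :=
    (summable_norm_sum_mul_antidiagonal_of_summable_norm hnorm hnorm).of_norm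
  have hFsq : F * F = ∑' n, ∑ p ∈ Finset.HasAntidiagonal.antidiagonal n, f p.1 * f p.2 :=
    tsum_mul_tsum_eq_tsum_sum_antidiagonal_of_summable_norm hnorm hnorm
  -- delta series
  have hdsum : Summable fun n : ℕ => (if n = 0 then (1:ℝ) else 0) * t ^ n := by
    apply summable_of_ne_finset_zero (s := {0})
    intro n hn
    simp only [Finset.mem_singleton] at hn
    simp [hn]
  have hdtsum : ∑' n : ℕ, (if n = 0 then (1:ℝ) else 0) * t ^ n = 1 := by
    rw [tsum_eq_single 0]
    · simp
    · intro b hb; simp [hb]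
  -- functional equation for F
  have hcf : ∀ k, (∑ p ∈ Finset.HasAntidiagonal.antidiagonal k, a p.1 * a p.2) * t ^ k
      = ∑ p ∈ Finset.HasAntidiagonal.antidiagonal k, f p.1 * f p.2 := by
    intro k
    rw [Finset.sum_mul]
    apply Finset.sum_congr rfl
    intro p hp
    rw [Finset.HasAntidiagonal.mem_antidiagonal] at hp
    simp only [hf, ← hp, pow_add]
    ring
  have hFeq : F = t * (1 + 2 * F) * (1 + F) := by
    have h0 : F = f 0 + ∑' n, f (n + 1) := Summable.tsum_eq_zero_add hsum
    have hstep : ∀ k : ℕ, f (k+1) = t * ((if k = 0 then (1:ℝ) else 0) * t ^ k)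
        + 3 * t * f k + 2 * t * (∑ p ∈ Finset.HasAntidiagonal.antidiagonal k, f p.1 * f p.2) := by
      intro k
      rw [← hcf k]
      simp only [hf, harec k, pow_succ]
      ring
    have hsum1 : Summable fun k : ℕ => t * ((if k = 0 then (1:ℝ) else 0) * t ^ k) :=
      hdsum.mul_left t
    have hsum2 : Summable fun k : ℕ => 3 * t * f k := hsum.mul_left (3 * t)
    have hsum3 : Summable fun k : ℕ =>
        2 * t * (∑ p ∈ Finset.HasAntidiagonal.antidiagonal k, f p.1 * f p.2) := hcs.mul_left (2 * t)
    calc F = f 0 + ∑' n, f (n + 1) := h0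
      _ = 0 + ∑' k : ℕ, (t * ((if k = 0 then (1:ℝ) else 0) * t ^ k)
            + 3 * t * f k + 2 * t * (∑ p ∈ Finset.HasAntidiagonal.antidiagonal k, f p.1 * f p.2)) := by
          rw [tsum_congr hstep]; simp [hf, ha0]
      _ = t * 1 + 3 * t * F + 2 * t * (F * F) := by
          rw [zero_add, Summable.tsum_add (hsum1.add hsum2) hsum3, Summable.tsum_add hsum1 hsum2,
            tsum_mul_left, tsum_mul_left, tsum_mul_left, hdtsum, hFsq, ← hF]
      _ = t * (1 + 2 * F) * (1 + F) := by ring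
  -- F and L are both roots of the quadratic; F ≤ L = smaller root ⇒ F = L
  have hfac : (F - L) * (2 * t * (F + L) + 3 * t - 1) = 0 := by
    linear_combination - hLeq - hFeq
  have : F = L := by
    rcases mul_eq_zero.mp hfac with h | h
    · linarith
    · exfalso
      nlinarith [mul_nonneg ht.le (sub_nonneg.mpr hFle)]
  rw [← hF] at *
  rw [this, hL]
end

section
/- Let S(t) be the unique formal power series over ℝ with zero constant term satisfying S = t(1+2S)(1+S), let R(t) = S(t) + t(1+S(t)), let D(t) = S(t) + S(t)²/(1 − R(t)) (the generating function of directed animals on 𝒩 by area), and let ρ = 3 − √8. For every real t with 0 < t < ρ, the power series D converges at t and D(t) = (1/4)·((1 + t)/√(1 − 6t + t²) − 1). -/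
/-!
STATEMENT 3: Let `S` be the unique formal power series over `ℝ` with zero constant
term satisfying `S = t(1+2S)(1+S)`, `R = S + t(1+S)`, and
`D = S + S²/(1-R)` (the generating function of directed animals on `𝒩` by area).
Let `ρ = 3 - √8`. For `0 < t < ρ`, the series `D` converges at `t` and its sum is
`(1/4)·((1+t)/√(1-6t+t²) - 1)`.
-/

open Finset in
/-- Sum over the "triangle" of antidiagonals is at most the product of partial sums. -/
lemma triangle_le_sq (f g : ℕ → ℝ) (hf : ∀ k, 0 ≤ f k) (hg : ∀ k, 0 ≤ g k) (N : ℕ) :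
    ∑ n ∈ range N, ∑ p ∈ antidiagonal n, f p.1 * g p.2
      ≤ (∑ k ∈ range N, f k) * (∑ m ∈ range N, g m) := by
  rw [Finset.sum_mul_sum]
  rw [← Finset.sum_biUnion (by
    intro x _ y _ hxy
    simp only [Function.onFun, Finset.disjoint_left]
    intro p hp hq
    exact hxy ((Finset.HasAntidiagonal.mem_antidiagonal.mp hp).symm.trans (Finset.HasAntidiagonal.mem_antidiagonal.mp hq)))]
  rw [← Finset.sum_product']
  apply Finset.sum_le_sum_of_subset_of_nonneg
  · intro p hp
    simp only [Finset.mem_biUnion] at hp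
    obtain ⟨n, hn, hpn⟩ := hp
    rw [Finset.HasAntidiagonal.mem_antidiagonal] at hpn
    simp only [Finset.mem_product, Finset.mem_range] at *
    omega
  · intro p _ _
    exact mul_nonneg (hf _) (hg _)

/-- Rewriting a weighted convolution. -/
lemma conv_wt (f g : ℕ → ℝ) (t : ℝ) (n : ℕ) :
    ∑ p ∈ Finset.HasAntidiagonal.antidiagonal n, (f p.1 * t ^ p.1) * (g p.2 * t ^ p.2)
      = (∑ p ∈ Finset.HasAntidiagonal.antidiagonal n, f p.1 * g p.2) * t ^ n := by
  rw [Finset.sum_mul]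
  refine Finset.sum_congr rfl fun p hp => ?_
  rw [Finset.HasAntidiagonal.mem_antidiagonal] at hp
  rw [← hp, pow_add]
  ring

/-- Cauchy product for summable nonnegative real series. -/
lemma cauchy_nonneg {f g : ℕ → ℝ} (hf0 : ∀ n, 0 ≤ f n) (hg0 : ∀ n, 0 ≤ g n)
    (hf : Summable f) (hg : Summable g) :
    Summable (fun n => ∑ p ∈ Finset.HasAntidiagonal.antidiagonal n, f p.1 * g p.2) ∧
    (∑' n, f n) * (∑' n, g n) = ∑' n, ∑ p ∈ Finset.HasAntidiagonal.antidiagonal n, f p.1 * g p.2 := by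
  have hf' : Summable fun n => ‖f n‖ :=
    (summable_congr fun n => by rw [Real.norm_of_nonneg (hf0 n)]).mpr hf
  have hg' : Summable fun n => ‖g n‖ :=
    (summable_congr fun n => by rw [Real.norm_of_nonneg (hg0 n)]).mpr hg
  exact ⟨(summable_norm_sum_mul_antidiagonal_of_summable_norm hf' hg').of_norm,
    tsum_mul_tsum_eq_tsum_sum_antidiagonal_of_summable_norm hf' hg'⟩

set_option maxHeartbeats 2000000 in
open PowerSeries in
theorem dirAnimalGF_sum_formula (S R D : PowerSeries ℝ)
    (hS0 : constantCoeff S = 0)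
    (hS : S = X * (1 + 2 * S) * (1 + S))
    (hR : R = S + X * (1 + S))
    (hD : D = S + S ^ 2 * (1 - R)⁻¹) :
    ∀ t : ℝ, 0 < t → t < 3 - Real.sqrt 8 →
      Summable (fun n : ℕ => coeff n D * t ^ n) ∧
      ∑' n : ℕ, coeff n D * t ^ n
        = (1 / 4) * ((1 + t) / Real.sqrt (1 - 6 * t + t ^ 2) - 1) := by
  intro t ht htρ
  -- numeric preliminaries
  have h8 : Real.sqrt 8 ^ 2 = 8 := Real.sq_sqrt (by norm_num)
  have h8' : (0:ℝ) ≤ Real.sqrt 8 := Real.sqrt_nonneg 8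
  have ht3 : t < 1/3 := by nlinarith
  have hΔ : 0 < 1 - 6*t + t^2 := by nlinarith
  set q : ℝ := Real.sqrt (1 - 6 * t + t ^ 2) with hq_def
  have hq2 : q ^ 2 = 1 - 6*t + t^2 := Real.sq_sqrt (by nlinarith)
  have hq0 : 0 < q := Real.sqrt_pos.mpr (by nlinarith)
  have hq_lt : q < 1 - 3*t := by nlinarith
  have hq_lt' : q < 1 + t := by nlinarith
  set σ : ℝ := (1 - 3*t - q) / (4*t) with hσ_def
  have hσ0 : 0 ≤ σ := by
    apply div_nonneg (by nlinarith) (by nlinarith)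
  have hσeq : t + 3*t*σ + 2*t*(σ*σ) = σ := by
    rw [hσ_def]
    field_simp
    linear_combination 2 * hq2
  -- coefficient sequences
  set a : ℕ → ℝ := fun n => coeff n S with ha_def
  set r : ℕ → ℝ := fun n => coeff n R with hr_def
  set d : ℕ → ℝ := fun n => coeff n D with hd_def
  set e : ℕ → ℝ := fun n => coeff n (1 - R)⁻¹ with he_def
  have hS' : S = X + (X*S + X*S + X*S) + (X*(S*S) + X*(S*S)) := hS.trans (by ring)
  have ha0 : a 0 = 0 := by
    simpa [ha_def, PowerSeries.coeff_zero_eq_constantCoeff] using hS0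
  have haS : ∀ n, a (n+1) = (if n = 0 then 1 else 0) + 3 * a n
      + 2 * ∑ p ∈ Finset.HasAntidiagonal.antidiagonal n, a p.1 * a p.2 := by
    intro n
    have h := congrArg (coeff (n+1)) hS'
    simp only [map_add, coeff_succ_X_mul] at h
    simp only [coeff_X, coeff_mul, show ((n:ℕ)+1 = 1) = (n = 0) from by simp] at h
    rw [show a (n+1) = coeff (n+1) S from rfl, h]
    ring
  have ha_nonneg : ∀ n, 0 ≤ a n := by
    intro n
    induction n using Nat.strong_induction_on with
    | _ n ih =>
      match n with
      | 0 => rw [ha0]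
      | Nat.succ m =>
        rw [haS m]
        have h1 : (0:ℝ) ≤ ∑ p ∈ Finset.HasAntidiagonal.antidiagonal m, a p.1 * a p.2 := by
          apply Finset.sum_nonneg
          intro p hp
          rw [Finset.HasAntidiagonal.mem_antidiagonal] at hp
          exact mul_nonneg (ih p.1 (by omega)) (ih p.2 (by omega))
        have h2 : (0:ℝ) ≤ a m := ih m (by omega)
        positivity
  -- R coefficients
  have hR' : R = S + X + X*S := hR.trans (by ring)
  have hr0 : r 0 = 0 := by
    have h := congrArg (constantCoeff) hR'
    simp only [map_add, map_mul, constantCoeff_X, hS0, mul_zero, zero_mul, add_zero] at h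
    simpa [hr_def, PowerSeries.coeff_zero_eq_constantCoeff] using h
  have hrS : ∀ n, r (n+1) = a (n+1) + (if n = 0 then 1 else 0) + a n := by
    intro n
    have h := congrArg (coeff (n+1)) hR'
    simp only [map_add, coeff_succ_X_mul, coeff_X,
      show ((n:ℕ)+1 = 1) = (n = 0) from by simp] at h
    exact h
  have hr_nonneg : ∀ n, 0 ≤ r n := by
    intro n
    match n with
    | 0 => rw [hr0]
    | Nat.succ m =>
      rw [hrS m]
      have := ha_nonneg (m+1); have := ha_nonneg m
      positivity
  -- inverse of 1 - R
  have hcR : constantCoeff R = 0 := by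
    have h := congrArg (constantCoeff) hR'
    simpa [hS0] using h
  have hc1R : constantCoeff (1 - R) ≠ 0 := by
    simp [hcR]
  have hinv : (1 - R)⁻¹ * (1 - R) = 1 := PowerSeries.inv_mul_cancel _ hc1R
  -- e coefficients
  have heS : ∀ n, e n = (if n = 0 then 1 else 0)
      + ∑ p ∈ Finset.HasAntidiagonal.antidiagonal n, e p.1 * r p.2 := by
    intro n
    simp only [he_def, hr_def]
    have h := congrArg (coeff n) hinv
    simp only [coeff_mul, map_sub, coeff_one, mul_sub, Finset.sum_sub_distrib] at h
    have h1 : ∑ p ∈ Finset.HasAntidiagonal.antidiagonal n,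
        coeff p.1 (1-R)⁻¹ * (if p.2 = 0 then (1:ℝ) else 0) = coeff n (1-R)⁻¹ := by
      rw [Finset.sum_eq_single_of_mem (n, 0) (by simp)]
      · simp
      · intro p hp hne
        rw [Finset.HasAntidiagonal.mem_antidiagonal] at hp
        have hp2 : p.2 ≠ 0 := by
          intro h2
          exact hne (Prod.ext (by omega) h2)
        simp [hp2]
    rw [h1] at h
    linarith [h]
  -- e is nonnegative
  have he_nonneg : ∀ n, 0 ≤ e n := by
    intro n
    induction n using Nat.strong_induction_on with
    | _ n ih =>
      rw [heS n]
      have h1 : (0:ℝ) ≤ ∑ p ∈ Finset.HasAntidiagonal.antidiagonal n, e p.1 * r p.2 := by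
        apply Finset.sum_nonneg
        intro p hp
        rw [Finset.HasAntidiagonal.mem_antidiagonal] at hp
        rcases Nat.eq_zero_or_pos p.2 with h2 | h2
        · rw [show p.2 = 0 from h2, hr0, mul_zero]
        · exact mul_nonneg (ih p.1 (by omega)) (hr_nonneg p.2)
      positivity
  -- d is nonnegative
  have hd_nonneg : ∀ n, 0 ≤ d n := by
    intro n
    have h := congrArg (coeff n) hD
    simp only [map_add, pow_two, coeff_mul] at h
    rw [show d n = coeff n D from rfl, h]
    apply add_nonneg (ha_nonneg n)
    apply Finset.sum_nonneg
    intro p _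
    refine mul_nonneg (Finset.sum_nonneg fun q _ => mul_nonneg (ha_nonneg q.1) (ha_nonneg q.2))
      (he_nonneg p.2)
  -- weighted sequences
  set A : ℕ → ℝ := fun n => a n * t ^ n with hA_def
  have hA_nonneg : ∀ n, 0 ≤ A n := fun n => mul_nonneg (ha_nonneg n) (by positivity)
  have hA0 : A 0 = 0 := by simp [hA_def, ha0]
  have hA_succ : ∀ n, A (n+1) = (if n = 0 then t else 0) + 3*t*A n
      + 2*t*(∑ p ∈ Finset.HasAntidiagonal.antidiagonal n, A p.1 * A p.2) := by
    intro n
    simp only [hA_def]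
    rw [conv_wt, haS n]
    rcases Nat.eq_zero_or_pos n with h | h
    · subst h; norm_num; ring
    · rw [if_neg (by omega), if_neg (by omega)]; ring
  -- partial sums of A are bounded by σ
  have hPA : ∀ N, ∑ n ∈ Finset.range N, A n ≤ σ := by
    intro N
    induction N with
    | zero => simpa using hσ0
    | succ N ih =>
      rw [Finset.sum_range_succ', hA0, add_zero]
      have hsplit : ∑ i ∈ Finset.range N, A (i+1)
          = (∑ i ∈ Finset.range N, (if i = 0 then t else 0))
            + 3*t*(∑ i ∈ Finset.range N, A i)
            + 2*t*(∑ i ∈ Finset.range N, ∑ p ∈ Finset.HasAntidiagonal.antidiagonal i, A p.1 * A p.2) := by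
        rw [Finset.mul_sum, Finset.mul_sum, ← Finset.sum_add_distrib, ← Finset.sum_add_distrib]
        exact Finset.sum_congr rfl fun i _ => hA_succ i
      rw [hsplit]
      have h1 : (∑ i ∈ Finset.range N, (if i = 0 then t else 0)) ≤ t := by
        rw [Finset.sum_ite_eq' (Finset.range N) 0 (fun _ => t)]
        split_ifs
        · exact le_rfl
        · exact ht.le
      have h2 : ∑ i ∈ Finset.range N, ∑ p ∈ Finset.HasAntidiagonal.antidiagonal i, A p.1 * A p.2 ≤ σ * σ := by
        refine le_trans (triangle_le_sq A A hA_nonneg hA_nonneg N) ?_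
        have hs : 0 ≤ ∑ k ∈ Finset.range N, A k := Finset.sum_nonneg fun k _ => hA_nonneg k
        exact mul_le_mul ih ih hs hσ0
      have h3 : 0 ≤ ∑ i ∈ Finset.range N, A i := Finset.sum_nonneg fun k _ => hA_nonneg k
      have h4 : 0 ≤ ∑ i ∈ Finset.range N, ∑ p ∈ Finset.HasAntidiagonal.antidiagonal i, A p.1 * A p.2 := by
        apply Finset.sum_nonneg
        intro i _
        exact Finset.sum_nonneg fun p _ => mul_nonneg (hA_nonneg p.1) (hA_nonneg p.2)
      have e2 : 3*t*(∑ i ∈ Finset.range N, A i) ≤ 3*t*σ :=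
        mul_le_mul_of_nonneg_left ih (by positivity)
      have e3 : 2*t*(∑ i ∈ Finset.range N, ∑ p ∈ Finset.HasAntidiagonal.antidiagonal i, A p.1 * A p.2)
          ≤ 2*t*(σ*σ) := mul_le_mul_of_nonneg_left h2 (by positivity)
      linarith [hσeq]
  have hA_sum : Summable A := summable_of_sum_range_le hA_nonneg hPA
  set L : ℝ := ∑' n, A n with hL_def
  have hL_le : L ≤ σ := Real.tsum_le_of_sum_range_le hA_nonneg hPA
  have hL0 : 0 ≤ L := tsum_nonneg hA_nonneg
  obtain ⟨hC2_sum, hC2_eq⟩ := cauchy_nonneg hA_nonneg hA_nonneg hA_sum hA_sum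
  have hshiftA : Summable (fun n => A (n+1)) := (summable_nat_add_iff 1).mpr hA_sum
  have hIf : Summable (fun n : ℕ => if n = 0 then t else 0) := by
    apply summable_of_ne_finset_zero (s := {0})
    intro n hn
    simp only [Finset.mem_singleton] at hn
    simp [hn]
  have hL_shift : ∑' n, A (n+1) = L := by
    have h0 := Summable.tsum_eq_zero_add hA_sum
    rw [hA0] at h0
    rw [hL_def]
    linarith [h0]
  have hLfun : L = t + 3*t*L + 2*t*(L*L) := by
    have h1 : ∑' n, A (n+1) = t + (3*t*L + 2*t*(L*L)) := by
      rw [tsum_congr hA_succ,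
        Summable.tsum_add (hIf.add (hA_sum.mul_left (3*t))) (hC2_sum.mul_left (2*t)),
        Summable.tsum_add hIf (hA_sum.mul_left (3*t)), tsum_mul_left, tsum_mul_left, tsum_ite_eq,
        ← hC2_eq, ← hL_def]
      ring
    linarith [h1, hL_shift]
  -- identify L with σ
  have hσ4 : σ * (4*t) = 1 - 3*t - q := by
    rw [hσ_def]
    field_simp
  have hquad : 2*t*(L*L) - (1 - 3*t)*L + t = 0 := by linear_combination -hLfun
  have hkey : (4*t*L - (1 - 3*t - q)) * (4*t*L - (1 - 3*t + q)) = 0 := by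
    linear_combination 8*t*hquad - hq2
  have hLσ : L = σ := by
    rcases mul_eq_zero.mp hkey with hc | hc
    · rw [hσ_def]
      field_simp
      linarith [hc]
    · exfalso
      have h4 : 4*t*L ≤ 4*t*σ := by
        have := mul_le_mul_of_nonneg_left hL_le (by positivity : (0:ℝ) ≤ 4*t)
        linarith [this]
      rw [mul_comm σ (4*t)] at hσ4
      linarith [h4, hσ4, hc, hq0]
  -- R weighted
  set Rw : ℕ → ℝ := fun n => r n * t ^ n with hRw_def
  have hRw_nonneg : ∀ n, 0 ≤ Rw n := fun n => mul_nonneg (hr_nonneg n) (by positivity)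
  have hRw0 : Rw 0 = 0 := by simp [hRw_def, hr0]
  have hRw_succ : ∀ n, Rw (n+1) = A (n+1) + (if n = 0 then t else 0) + t * A n := by
    intro n
    simp only [hRw_def, hA_def]
    rw [hrS n]
    rcases Nat.eq_zero_or_pos n with h | h
    · subst h; norm_num; ring
    · rw [if_neg (by omega), if_neg (by omega)]; ring
  have hRw_shift_sum : Summable (fun n => Rw (n+1)) := by
    apply Summable.congr ((hshiftA.add hIf).add (hA_sum.mul_left t))
    intro n
    rw [hRw_succ n]
  have hRw_sum : Summable Rw := (summable_nat_add_iff 1).mp hRw_shift_sum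
  set Rt : ℝ := ∑' n, Rw n with hRt_def
  have hRt_eq : Rt = L + t + t*L := by
    rw [hRt_def, Summable.tsum_eq_zero_add hRw_sum, hRw0, tsum_congr hRw_succ,
      Summable.tsum_add (hshiftA.add hIf) (hA_sum.mul_left t), Summable.tsum_add hshiftA hIf,
      tsum_mul_left, tsum_ite_eq, hL_shift, ← hL_def]
    ring
  have step1 : 1 - Rt = q*(1+t-q)/(4*t) := by
    rw [hRt_eq, hLσ, eq_div_iff (by positivity : (4*t:ℝ) ≠ 0)]
    linear_combination (-(1+t))*hσ4 + hq2
  have h1Rt : 0 < 1 - Rt := by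
    rw [step1]
    apply div_pos (mul_pos hq0 (by linarith)) (by linarith)
  -- D relation
  have hDmul : D * (1 - R) = S * (1 - R) + S^2 := by
    calc D * (1 - R) = (S + S^2*(1-R)⁻¹) * (1-R) := by rw [← hD]
    _ = S * (1-R) + S^2*((1-R)⁻¹*(1-R)) := by ring
    _ = S * (1-R) + S^2 := by rw [hinv, mul_one]
  have hDform : D = S + S*S + R*D - S*R := by linear_combination hDmul
  have hdrec : ∀ n, d n = a n + (∑ p ∈ Finset.HasAntidiagonal.antidiagonal n, a p.1 * a p.2)
      + (∑ p ∈ Finset.HasAntidiagonal.antidiagonal n, r p.1 * d p.2)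
      - (∑ p ∈ Finset.HasAntidiagonal.antidiagonal n, a p.1 * r p.2) := by
    intro n
    simp only [hd_def, ha_def, hr_def]
    have h := congrArg (coeff n) hDform
    simp only [map_add, map_sub, coeff_mul] at h
    exact h
  set Dw : ℕ → ℝ := fun n => d n * t ^ n with hDw_def
  have hDw_nonneg : ∀ n, 0 ≤ Dw n := fun n => mul_nonneg (hd_nonneg n) (by positivity)
  have hDw_eq : ∀ n, Dw n = A n + (∑ p ∈ Finset.HasAntidiagonal.antidiagonal n, A p.1 * A p.2)
      + (∑ p ∈ Finset.HasAntidiagonal.antidiagonal n, Rw p.1 * Dw p.2)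
      - (∑ p ∈ Finset.HasAntidiagonal.antidiagonal n, A p.1 * Rw p.2) := by
    intro n
    simp only [hDw_def, hA_def, hRw_def]
    rw [hdrec n, sub_mul, add_mul, add_mul, ← conv_wt a a t n, ← conv_wt r d t n,
      ← conv_wt a r t n]
  have hPD : ∀ N, ∑ n ∈ Finset.range N, Dw n ≤ (L + L*L) / (1 - Rt) := by
    intro N
    rw [le_div_iff₀ h1Rt]
    have hsplit : ∑ n ∈ Finset.range N, Dw n
        = (∑ n ∈ Finset.range N, A n)
          + (∑ n ∈ Finset.range N, ∑ p ∈ Finset.HasAntidiagonal.antidiagonal n, A p.1 * A p.2)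
          + (∑ n ∈ Finset.range N, ∑ p ∈ Finset.HasAntidiagonal.antidiagonal n, Rw p.1 * Dw p.2)
          - (∑ n ∈ Finset.range N, ∑ p ∈ Finset.HasAntidiagonal.antidiagonal n, A p.1 * Rw p.2) := by
      rw [← Finset.sum_add_distrib, ← Finset.sum_add_distrib, ← Finset.sum_sub_distrib]
      exact Finset.sum_congr rfl fun n _ => hDw_eq n
    have hPD0 : 0 ≤ ∑ n ∈ Finset.range N, Dw n := Finset.sum_nonneg fun n _ => hDw_nonneg n
    have hb1 : ∑ n ∈ Finset.range N, A n ≤ L :=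
      Summable.sum_le_tsum _ (fun n _ => hA_nonneg n) hA_sum
    have hb2 : ∑ n ∈ Finset.range N, ∑ p ∈ Finset.HasAntidiagonal.antidiagonal n, A p.1 * A p.2 ≤ L*L := by
      refine le_trans (triangle_le_sq A A hA_nonneg hA_nonneg N) ?_
      exact mul_le_mul hb1 hb1 (Finset.sum_nonneg fun k _ => hA_nonneg k) hL0
    have hb3 : ∑ n ∈ Finset.range N, ∑ p ∈ Finset.HasAntidiagonal.antidiagonal n, Rw p.1 * Dw p.2
        ≤ Rt * (∑ n ∈ Finset.range N, Dw n) := by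
      refine le_trans (triangle_le_sq Rw Dw hRw_nonneg hDw_nonneg N) ?_
      exact mul_le_mul_of_nonneg_right
        (Summable.sum_le_tsum _ (fun n _ => hRw_nonneg n) hRw_sum) hPD0
    have hb4 : 0 ≤ ∑ n ∈ Finset.range N, ∑ p ∈ Finset.HasAntidiagonal.antidiagonal n, A p.1 * Rw p.2 := by
      apply Finset.sum_nonneg
      intro i _
      exact Finset.sum_nonneg fun p _ => mul_nonneg (hA_nonneg p.1) (hRw_nonneg p.2)
    have hexp : (∑ n ∈ Finset.range N, Dw n) * (1 - Rt)
        = (∑ n ∈ Finset.range N, Dw n) - Rt * (∑ n ∈ Finset.range N, Dw n) := by ring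
    linarith [hsplit, hb1, hb2, hb3, hb4, hexp]
  have hDw_sum : Summable Dw := summable_of_sum_range_le hDw_nonneg hPD
  set Dt : ℝ := ∑' n, Dw n with hDt_def
  obtain ⟨hRD_sum, hRD_eq⟩ := cauchy_nonneg hRw_nonneg hDw_nonneg hRw_sum hDw_sum
  obtain ⟨hSR_sum, hSR_eq⟩ := cauchy_nonneg hA_nonneg hRw_nonneg hA_sum hRw_sum
  have hDt_eq : Dt = L + L*L + Rt*Dt - L*Rt := by
    have h2 : ∑' n, (A n + (∑ p ∈ Finset.HasAntidiagonal.antidiagonal n, A p.1 * A p.2)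
        + (∑ p ∈ Finset.HasAntidiagonal.antidiagonal n, Rw p.1 * Dw p.2)
        - (∑ p ∈ Finset.HasAntidiagonal.antidiagonal n, A p.1 * Rw p.2))
        = L + L*L + Rt*Dt - L*Rt := by
      rw [Summable.tsum_sub ((hA_sum.add hC2_sum).add hRD_sum) hSR_sum,
        Summable.tsum_add (hA_sum.add hC2_sum) hRD_sum, Summable.tsum_add hA_sum hC2_sum,
        ← hC2_eq, ← hRD_eq, ← hSR_eq, ← hL_def, ← hRt_def, ← hDt_def]
    exact (hDt_def.trans (tsum_congr hDw_eq)).trans h2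
  have hDt_val : Dt * (1 - Rt) = L + L*L - L*Rt := by linear_combination hDt_eq
  have step3 : L + L*L - L*Rt = (1+t-q)^2/(16*t) := by
    rw [hRt_eq, hLσ, eq_div_iff (by positivity : (16*t:ℝ) ≠ 0)]
    linear_combination (4*(1-t) - 4*t*σ - (1-3*t-q))*hσ4 - 2*hq2
  have step2 : (1/4*((1+t)/q - 1)) * (1 - Rt) = (1+t-q)^2/(16*t) := by
    rw [step1]
    field_simp
    ring
  have hfinal : Dt = 1/4*((1+t)/q - 1) :=
    mul_right_cancel₀ (ne_of_gt h1Rt) (hDt_val.trans (step3.trans step2.symm))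
  exact ⟨hDw_sum, hfinal⟩
end

section
/- Let ρ = 3 − √8, and for 0 < t < ρ let D(t) = (1/4)·((1+t)/√(1−6t+t²) − 1) and E(t) = S(t)²/(1−R(t))², where S(t) = (1−3t−√(1−6t+t²))/(4t) and R(t) = S(t)+t(1+S(t)). Then as t → ρ⁻: (i) D(t) − 2^{−7/4}·(1 − t/ρ)^{−1/2} remains bounded on (0,ρ); (ii) (E(t) − 2^{−5/2}·(1 − t/ρ)^{−1})·(1 − t/ρ)^{1/2} remains bounded on (0,ρ). -/
/-!
STATEMENT 6: singular expansions near `ρ = 3 - √8` of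
`D(t) = (1/4)((1+t)/√(1-6t+t²) - 1)` and `E(t) = S(t)²/(1-R(t))²` where
`S(t) = (1-3t-√(1-6t+t²))/(4t)` and `R(t) = S(t) + t(1+S(t))`:
(i) `D(t) - 2^{-7/4}(1-t/ρ)^{-1/2}` is bounded on `(0,ρ)`;
(ii) `(E(t) - 2^{-5/2}(1-t/ρ)^{-1})·(1-t/ρ)^{1/2}` is bounded on `(0,ρ)`.
-/

noncomputable def rhoN : ℝ := 3 - Real.sqrt 8

noncomputable def Sfun (t : ℝ) : ℝ :=
  (1 - 3 * t - Real.sqrt (1 - 6 * t + t ^ 2)) / (4 * t)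

noncomputable def Rfun (t : ℝ) : ℝ := Sfun t + t * (1 + Sfun t)

noncomputable def Dfun (t : ℝ) : ℝ :=
  (1 / 4) * ((1 + t) / Real.sqrt (1 - 6 * t + t ^ 2) - 1)

noncomputable def Efun (t : ℝ) : ℝ := (Sfun t) ^ 2 / (1 - Rfun t) ^ 2

set_option maxHeartbeats 2000000

lemma boundD (s w t u v : ℝ) (hs2 : s^2 = 2) (hw2 : w^2 = s) (hs0 : 0 ≤ s) (hw0 : 0 ≤ w)
    (ht0 : 0 < t) (htr : t < 3 - 2*s) (hu2 : u^2 = 3 - 2*s - t) (hv2 : v^2 = 3 + 2*s - t)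
    (hu0 : 0 < u) (hv0 : 0 < v) :
    |(1+t)/(4*(u*v)) - 1/4 - w/4 * ((s-1)/u)| ≤ 1 := by
  have hslb : 1.4 ≤ s := by nlinarith
  have hsub : s ≤ 1.45 := by nlinarith
  have htub : t < 0.2 := by nlinarith
  have hu1 : u ≤ 1 := by nlinarith
  have hv2' : 2 ≤ v := by nlinarith
  have hw1 : 1 ≤ w := by nlinarith
  have hk : (0.8:ℝ) ≤ w*(s-1)*v := by
    have a1 : (0.4:ℝ) ≤ s-1 := by linarith
    have a2 : (0.8:ℝ) ≤ (s-1)*v := by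
      have := mul_le_mul a1 hv2' (by norm_num) (by linarith)
      linarith
    have a3 := le_mul_of_one_le_left (by linarith : (0:ℝ) ≤ (s-1)*v) hw1
    calc (0.8:ℝ) ≤ (s-1)*v := a2
      _ ≤ w*((s-1)*v) := a3
      _ = w*(s-1)*v := by ring
  have hden : 0 < 1 + t + w*(s-1)*v := by linarith
  have key : (1+t) - w*(s-1)*v = -(u^2*(t+1+s))/(1+t+w*(s-1)*v) := by
    rw [eq_div_iff hden.ne']
    linear_combination ((-1)*v^2 + 2*s*v^2 + (-1)*s^2*v^2) * hw2
      + (1 + s + t) * hu2 + ((-1)*s + 2*s^2 + (-1)*s^3) * hv2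
      + (-2 + s + (-2)*s^2 + (-2)*t + t*s) * hs2
  have heq : (1+t)/(4*(u*v)) - 1/4 - w/4 * ((s-1)/u)
      = -(u*(t+1+s))/(4*v*(1+t+w*(s-1)*v)) - 1/4 := by
    have expand : (1+t)/(4*(u*v)) - w/4 * ((s-1)/u) = ((1+t) - w*(s-1)*v)/(4*(u*v)) := by
      field_simp
    rw [sub_right_comm, expand, key, div_div,
      show -(u^2*(t+1+s)) = (-(u*(t+1+s)))*u by ring,
      show (1+t+w*(s-1)*v) * (4*(u*v)) = (4*v*(1+t+w*(s-1)*v))*u by ring,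
      mul_div_mul_right _ _ hu0.ne']
  rw [heq]
  have hX0 : 0 ≤ u*(t+1+s) := by positivity
  have hX3 : u*(t+1+s) ≤ 3 := by nlinarith
  have hfac : (1:ℝ) ≤ 1 + t + w*(s-1)*v := by linarith
  have hY8 : (8:ℝ) ≤ 4*v*(1+t+w*(s-1)*v) := by
    have h := mul_le_mul hv2' hfac (by norm_num) (by linarith)
    linarith
  have h1 : u*(t+1+s)/(4*v*(1+t+w*(s-1)*v)) ≤ 3/8 :=
    div_le_div₀ (by norm_num) hX3 (by norm_num) hY8
  have h2 : 0 ≤ u*(t+1+s)/(4*v*(1+t+w*(s-1)*v)) := by positivity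
  rw [abs_le, neg_div]
  constructor <;> linarith

set_option maxHeartbeats 4000000 in
lemma boundE (s t u v : ℝ) (hs2 : s^2 = 2)
    (ht0 : 0 < t) (htr : t < 3 - 2*s) (hu2 : u^2 = 3 - 2*s - t) (hv2 : v^2 = 3 + 2*s - t)
    (hu0 : 0 < u) (hv0 : 0 < v) (hs0 : 0 ≤ s) :
    |(4*t^2/(u^2*v^2*(u*v+1-t)^2) - s/8*((3-2*s)/u^2)) * (u/(s-1))| ≤ 100 := by
  have hslb : 1.4 ≤ s := by nlinarith
  have hsub : s ≤ 1.45 := by nlinarith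
  have htub : t < 0.2 := by nlinarith
  have hu1 : u ≤ 1 := by nlinarith
  have hv2' : 2 ≤ v := by nlinarith
  have hvub : v ≤ 2.5 := by nlinarith
  have hd0 : 0 < u*v+1-t := by nlinarith
  have hs1 : (0.4:ℝ) ≤ s - 1 := by linarith
  have hA0 : (0:ℝ) < u^2*v^2*(u*v+1-t)^2 := by positivity
  have hkey : 32*t^2 - s*(3-2*s)*v^2*(u*v+1-t)^2
      = u*(u*((4-3*s)*t^2 - (16+10*s)*t - (4+3*s)) - 2*s*(3-2*s)*(1-t)*v^3 - s*(3-2*s)*u*v^4) := by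
    linear_combination (4 + 3*s + 16*t + 10*t*s - 4*t^2 + 3*t^2*s) * hu2
      + ((-3)*s + 2*s^2 + 6*t*s - 4*t*s^2 - 3*t^2*s + 2*t^2*s^2) * hv2
      + (-6 + 4*s - 22*t - 8*t*s - 2*t^2 + 4*t^2*s - 2*t^3) * hs2
  have c0 : s/8*((3-2*s)/u^2) = s*(3-2*s)/(8*u^2) := by ring
  have c1 : 4*t^2/(u^2*v^2*(u*v+1-t)^2) - s*(3-2*s)/(8*u^2)
      = (32*t^2 - s*(3-2*s)*v^2*(u*v+1-t)^2)/(8*(u^2*v^2*(u*v+1-t)^2)) := by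
    rw [div_sub_div _ _ hA0.ne' (by positivity : ((8:ℝ)*u^2) ≠ 0),
      div_eq_div_iff (by positivity) (by positivity)]
    ring
  have c2 : (32*t^2 - s*(3-2*s)*v^2*(u*v+1-t)^2)/(8*(u^2*v^2*(u*v+1-t)^2)) * (u/(s-1))
      = (u*((4-3*s)*t^2 - (16+10*s)*t - (4+3*s)) - 2*s*(3-2*s)*(1-t)*v^3 - s*(3-2*s)*u*v^4)
        /(8*(s-1)*v^2*(u*v+1-t)^2) := by
    rw [div_mul_div_comm, div_eq_div_iff (by positivity) (by positivity)]
    linear_combination (8*(s-1)*v^2*(u*v+1-t)^2*u) * hkey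
  rw [c0, c1, c2]
  set Q : ℝ := (4-3*s)*t^2 - (16+10*s)*t - (4+3*s) with hQdef
  set Num : ℝ := u*Q - 2*s*(3-2*s)*(1-t)*v^3 - s*(3-2*s)*u*v^4 with hNumdef
  set Den : ℝ := 8*(s-1)*v^2*(u*v+1-t)^2 with hDendef
  have hv2sq : (4:ℝ) ≤ v^2 := by nlinarith
  have hv2ub : v^2 ≤ 6.25 := by nlinarith
  have hv3 : v^3 ≤ 16 := by
    have h := mul_le_mul hv2ub hvub hv0.le (by norm_num)
    calc v^3 = v^2*v := by ring
      _ ≤ 6.25*2.5 := h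
      _ ≤ 16 := by norm_num
  have hv4 : v^4 ≤ 40 := by
    have h := mul_le_mul hv2ub hv2ub (sq_nonneg v) (by norm_num)
    calc v^4 = v^2*v^2 := by ring
      _ ≤ 6.25*6.25 := h
      _ ≤ 40 := by norm_num
  have hr0 : 0 ≤ s*(3-2*s) := by nlinarith
  have hrub : s*(3-2*s) ≤ 0.5 := by nlinarith
  have hQub : Q ≤ 0 := by rw [hQdef]; nlinarith
  have hQlb : (-15:ℝ) ≤ Q := by rw [hQdef]; nlinarith
  have e1 : u*(-15:ℝ) ≤ u*Q := mul_le_mul_of_nonneg_left hQlb hu0.le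
  have e1' : (-15:ℝ) ≤ u*Q := by nlinarith
  have f2 : s*(3-2*s)*(1-t) ≤ 0.5 := by nlinarith
  have f2' : 0 ≤ s*(3-2*s)*(1-t) := by
    have : (0:ℝ) < 1 - t := by linarith
    positivity
  have f3 : s*(3-2*s)*(1-t)*v^3 ≤ 0.5*16 :=
    mul_le_mul f2 hv3 (by positivity) (by norm_num)
  have f3' : 0 ≤ s*(3-2*s)*(1-t)*v^3 := by positivity
  have g2 : s*(3-2*s)*u ≤ 0.5 := by nlinarith
  have g3 : s*(3-2*s)*u*v^4 ≤ 0.5*40 :=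
    mul_le_mul g2 hv4 (by positivity) (by norm_num)
  have g3' : 0 ≤ s*(3-2*s)*u*v^4 := by positivity
  have hNumub : Num ≤ 0 := by
    rw [hNumdef]
    have h : u*Q ≤ 0 := mul_nonpos_of_nonneg_of_nonpos hu0.le hQub
    linarith [f3', g3']
  have hNumlb : (-56:ℝ) ≤ Num := by
    rw [hNumdef]
    linarith [f3, g3, e1']
  have hd08 : (0.8:ℝ) ≤ u*v+1-t := by
    have := mul_nonneg hu0.le hv0.le
    linarith
  have hd2 : (0.64:ℝ) ≤ (u*v+1-t)^2 := by
    have h := mul_le_mul hd08 hd08 (by norm_num) (by linarith)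
    calc (0.64:ℝ) = 0.8*0.8 := by norm_num
      _ ≤ (u*v+1-t)*(u*v+1-t) := h
      _ = (u*v+1-t)^2 := by ring
  have hDen8 : (8:ℝ) ≤ Den := by
    rw [hDendef]
    have h1 : (0.4:ℝ)*4 ≤ (s-1)*v^2 := mul_le_mul hs1 hv2sq (by norm_num) (by linarith)
    have h2 : ((0.4:ℝ)*4)*0.64 ≤ ((s-1)*v^2)*(u*v+1-t)^2 :=
      mul_le_mul h1 hd2 (by norm_num) (by nlinarith)
    linarith
  have hDen0 : (0:ℝ) < Den := by linarith
  rw [abs_le]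
  constructor
  · have h1 : (-Num)/Den ≤ 56/8 := div_le_div₀ (by norm_num) (by linarith) (by norm_num) hDen8
    rw [neg_div] at h1
    linarith
  · have : Num/Den ≤ 0 := div_nonpos_of_nonpos_of_nonneg hNumub hDen0.le
    linarith

set_option maxHeartbeats 4000000 in
theorem singular_expansion_D_and_E :
    (∃ C : ℝ, ∀ t ∈ Set.Ioo (0 : ℝ) rhoN,
      |Dfun t - (2 : ℝ) ^ (-(7 : ℝ) / 4) * (1 - t / rhoN) ^ (-(1 : ℝ) / 2)| ≤ C) ∧
    (∃ C : ℝ, ∀ t ∈ Set.Ioo (0 : ℝ) rhoN,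
      |(Efun t - (2 : ℝ) ^ (-(5 : ℝ) / 2) * (1 - t / rhoN)⁻¹)
        * (1 - t / rhoN) ^ ((1 : ℝ) / 2)| ≤ C) := by
  constructor
  · refine ⟨1, fun t ht => ?_⟩
    obtain ⟨ht0, htr'⟩ := ht
    set s : ℝ := Real.sqrt 2 with hs_def
    have hs2 : s^2 = 2 := Real.sq_sqrt (by norm_num)
    have hs0 : (0:ℝ) ≤ s := Real.sqrt_nonneg 2
    have hslb : 1.4 ≤ s := by nlinarith
    have hsub : s ≤ 1.45 := by nlinarith
    have hrho : rhoN = 3 - 2*s := by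
      rw [rhoN, show (8:ℝ) = 2^2*2 by norm_num, Real.sqrt_mul (by positivity), Real.sqrt_sq (by norm_num)]
    have htr : t < 3 - 2*s := by rw [← hrho]; exact htr'
    have htub : t < 0.2 := by linarith
    set w : ℝ := Real.sqrt s with hw_def
    have hw2 : w^2 = s := Real.sq_sqrt hs0
    have hw0 : (0:ℝ) ≤ w := Real.sqrt_nonneg s
    set u : ℝ := Real.sqrt (rhoN - t) with hu_def
    set v : ℝ := Real.sqrt (3 + 2*s - t) with hv_def
    have hrt0 : (0:ℝ) < rhoN - t := by rw [hrho]; linarith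
    have hu2 : u^2 = 3 - 2*s - t := by rw [hu_def, Real.sq_sqrt hrt0.le, hrho]
    have hu0 : (0:ℝ) < u := Real.sqrt_pos.mpr hrt0
    have hv2 : v^2 = 3 + 2*s - t := Real.sq_sqrt (by linarith)
    have hv0 : (0:ℝ) < v := Real.sqrt_pos.mpr (by linarith)
    have hfac : 1 - 6*t + t^2 = (rhoN - t) * (3 + 2*s - t) := by
      rw [hrho]; linear_combination 4*hs2
    have hsd : Real.sqrt (1 - 6*t + t^2) = u * v := by
      rw [hfac, Real.sqrt_mul hrt0.le]
    have huv0 : (0:ℝ) < u*v := mul_pos hu0 hv0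
    -- D value
    have hDval : Dfun t = (1+t)/(4*(u*v)) - 1/4 := by
      rw [Dfun, hsd]
      field_simp
    -- rpow facts
    have hApow : (2:ℝ) ^ (-(7:ℝ)/4) = w/4 := by
      have h1 : w = (2:ℝ) ^ ((1:ℝ)/4) := by
        rw [hw_def, hs_def, Real.sqrt_eq_rpow, Real.sqrt_eq_rpow, ← Real.rpow_mul (by norm_num)]
        norm_num
      rw [h1, show (-(7:ℝ)/4) = 1/4 + (-2 : ℤ) by norm_num, Real.rpow_add (by norm_num), Real.rpow_intCast]
      norm_num; ring
    have hTpow : (2:ℝ) ^ (-(5:ℝ)/2) = s/8 := by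
      rw [show (-(5:ℝ)/2) = 1/2 + (-3 : ℤ) by norm_num, Real.rpow_add (by norm_num), Real.rpow_intCast,
        ← Real.sqrt_eq_rpow]
      norm_num; ring
    have hrho0 : (0:ℝ) < rhoN := by rw [hrho]; linarith
    have hx : 1 - t/rhoN = (rhoN - t)/rhoN := by field_simp
    have hsr : Real.sqrt rhoN = s - 1 := by
      rw [show rhoN = (s-1)^2 by rw [hrho]; linear_combination -hs2]
      exact Real.sqrt_sq (by linarith)
    have hroot : Real.sqrt (1 - t/rhoN) = u/(s-1) := by
      rw [hx, Real.sqrt_div hrt0.le, hsr, hu_def]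
    have hXval : (1 - t/rhoN) ^ (-(1:ℝ)/2) = (s-1)/u := by
      have hpos : (0:ℝ) < 1 - t/rhoN := by rw [hx]; positivity
      rw [show (-(1:ℝ)/2) = -(1/2) by norm_num, Real.rpow_neg hpos.le, ← Real.sqrt_eq_rpow, hroot, inv_div]
    have hHval : (1 - t/rhoN) ^ ((1:ℝ)/2) = u/(s-1) := by
      rw [← Real.sqrt_eq_rpow, hroot]
    have hTinv : (1 - t/rhoN)⁻¹ = (3-2*s)/u^2 := by
      rw [hx, inv_div, hrho, ← hu2]
    -- S, R, E values
    have hd1 : (0:ℝ) < 1 - 3*t + u*v := by nlinarith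
    have hS : Sfun t = 2*t/(1-3*t+u*v) := by
      rw [Sfun, hsd]
      rw [div_eq_div_iff (by positivity) hd1.ne']
      linear_combination (-(v^2))*hu2 + (-3+2*s+t)*hv2 + 4*hs2
    have hR : 1 - Rfun t = u*v*(u*v+1-t)/(1-3*t+u*v) := by
      rw [Rfun, hS]
      have hd1ne : (1-3*t+u*v) ≠ 0 := hd1.ne'
      rw [eq_div_iff hd1ne]
      have e : 2*t/(1-3*t+u*v) * (1-3*t+u*v) = 2*t := div_mul_cancel₀ _ hd1ne
      linear_combination (-(1+t))*e + (-(v^2))*hu2 + (-3+2*s+t)*hv2 + 4*hs2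
    have hduv : (0:ℝ) < u*v+1-t := by nlinarith
    have hEval : Efun t = 4*t^2/(u^2*v^2*(u*v+1-t)^2) := by
      rw [Efun, hR, hS]
      have hd1ne : (1-3*t+u*v) ≠ 0 := hd1.ne'
      rw [div_pow, div_pow, div_div_div_cancel_right₀ (pow_ne_zero 2 hd1ne)]
      ring
    rw [hApow, hXval, hDval]
    exact boundD s w t u v hs2 hw2 hs0 hw0 ht0 htr hu2 hv2 hu0 hv0
  · refine ⟨100, fun t ht => ?_⟩
    obtain ⟨ht0, htr'⟩ := ht
    set s : ℝ := Real.sqrt 2 with hs_def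
    have hs2 : s^2 = 2 := Real.sq_sqrt (by norm_num)
    have hs0 : (0:ℝ) ≤ s := Real.sqrt_nonneg 2
    have hslb : 1.4 ≤ s := by nlinarith
    have hsub : s ≤ 1.45 := by nlinarith
    have hrho : rhoN = 3 - 2*s := by
      rw [rhoN, show (8:ℝ) = 2^2*2 by norm_num, Real.sqrt_mul (by positivity), Real.sqrt_sq (by norm_num)]
    have htr : t < 3 - 2*s := by rw [← hrho]; exact htr'
    have htub : t < 0.2 := by linarith
    set w : ℝ := Real.sqrt s with hw_def
    have hw2 : w^2 = s := Real.sq_sqrt hs0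
    have hw0 : (0:ℝ) ≤ w := Real.sqrt_nonneg s
    set u : ℝ := Real.sqrt (rhoN - t) with hu_def
    set v : ℝ := Real.sqrt (3 + 2*s - t) with hv_def
    have hrt0 : (0:ℝ) < rhoN - t := by rw [hrho]; linarith
    have hu2 : u^2 = 3 - 2*s - t := by rw [hu_def, Real.sq_sqrt hrt0.le, hrho]
    have hu0 : (0:ℝ) < u := Real.sqrt_pos.mpr hrt0
    have hv2 : v^2 = 3 + 2*s - t := Real.sq_sqrt (by linarith)
    have hv0 : (0:ℝ) < v := Real.sqrt_pos.mpr (by linarith)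
    have hfac : 1 - 6*t + t^2 = (rhoN - t) * (3 + 2*s - t) := by
      rw [hrho]; linear_combination 4*hs2
    have hsd : Real.sqrt (1 - 6*t + t^2) = u * v := by
      rw [hfac, Real.sqrt_mul hrt0.le]
    have huv0 : (0:ℝ) < u*v := mul_pos hu0 hv0
    -- D value
    have hDval : Dfun t = (1+t)/(4*(u*v)) - 1/4 := by
      rw [Dfun, hsd]
      field_simp
    -- rpow facts
    have hApow : (2:ℝ) ^ (-(7:ℝ)/4) = w/4 := by
      have h1 : w = (2:ℝ) ^ ((1:ℝ)/4) := by
        rw [hw_def, hs_def, Real.sqrt_eq_rpow, Real.sqrt_eq_rpow, ← Real.rpow_mul (by norm_num)]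
        norm_num
      rw [h1, show (-(7:ℝ)/4) = 1/4 + (-2 : ℤ) by norm_num, Real.rpow_add (by norm_num), Real.rpow_intCast]
      norm_num; ring
    have hTpow : (2:ℝ) ^ (-(5:ℝ)/2) = s/8 := by
      rw [show (-(5:ℝ)/2) = 1/2 + (-3 : ℤ) by norm_num, Real.rpow_add (by norm_num), Real.rpow_intCast,
        ← Real.sqrt_eq_rpow]
      norm_num; ring
    have hrho0 : (0:ℝ) < rhoN := by rw [hrho]; linarith
    have hx : 1 - t/rhoN = (rhoN - t)/rhoN := by field_simp
    have hsr : Real.sqrt rhoN = s - 1 := by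
      rw [show rhoN = (s-1)^2 by rw [hrho]; linear_combination -hs2]
      exact Real.sqrt_sq (by linarith)
    have hroot : Real.sqrt (1 - t/rhoN) = u/(s-1) := by
      rw [hx, Real.sqrt_div hrt0.le, hsr, hu_def]
    have hXval : (1 - t/rhoN) ^ (-(1:ℝ)/2) = (s-1)/u := by
      have hpos : (0:ℝ) < 1 - t/rhoN := by rw [hx]; positivity
      rw [show (-(1:ℝ)/2) = -(1/2) by norm_num, Real.rpow_neg hpos.le, ← Real.sqrt_eq_rpow, hroot, inv_div]
    have hHval : (1 - t/rhoN) ^ ((1:ℝ)/2) = u/(s-1) := by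
      rw [← Real.sqrt_eq_rpow, hroot]
    have hTinv : (1 - t/rhoN)⁻¹ = (3-2*s)/u^2 := by
      rw [hx, inv_div, hrho, ← hu2]
    -- S, R, E values
    have hd1 : (0:ℝ) < 1 - 3*t + u*v := by nlinarith
    have hS : Sfun t = 2*t/(1-3*t+u*v) := by
      rw [Sfun, hsd]
      rw [div_eq_div_iff (by positivity) hd1.ne']
      linear_combination (-(v^2))*hu2 + (-3+2*s+t)*hv2 + 4*hs2
    have hR : 1 - Rfun t = u*v*(u*v+1-t)/(1-3*t+u*v) := by
      rw [Rfun, hS]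
      have hd1ne : (1-3*t+u*v) ≠ 0 := hd1.ne'
      rw [eq_div_iff hd1ne]
      have e : 2*t/(1-3*t+u*v) * (1-3*t+u*v) = 2*t := div_mul_cancel₀ _ hd1ne
      linear_combination (-(1+t))*e + (-(v^2))*hu2 + (-3+2*s+t)*hv2 + 4*hs2
    have hduv : (0:ℝ) < u*v+1-t := by nlinarith
    have hEval : Efun t = 4*t^2/(u^2*v^2*(u*v+1-t)^2) := by
      rw [Efun, hR, hS]
      have hd1ne : (1-3*t+u*v) ≠ 0 := hd1.ne'
      rw [div_pow, div_pow, div_div_div_cancel_right₀ (pow_ne_zero 2 hd1ne)]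
      ring
    rw [hEval, hTpow, hTinv, hHval]
    exact boundE s t u v hs2 ht0 htr hu2 hv2 hu0 hv0 hs0
end

section
/- For every n ≥ 1, the projection π induces a bijection between directed animals of area n on the lattice 𝒩, taken up to translation, and pyramids of polymers of total length n, taken up to translation. -/
/-!
STATEMENT 7: For every `n ≥ 1`, the projection `π` induces a bijection between
directed animals of area `n` on the lattice `𝒩` (up to translation) and pyramids
of polymers of total length `n` (up to translation).

Animals are normalized up to translation by placing the canonical source (the
leftmost site of the bottommost segment) at the origin; pyramids are normalized
up to translation by requiring the minimal polymer to have left endpoint `0`.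
The projection relation `Projects A H` says that `H` is obtained as the sequence
of projections of the segments of `A`, listed in weakly increasing height order.
-/

def NSteps : Set (ℤ × ℤ) := {(-1, 0), (-1, 1), (0, 1), (1, 1), (1, 0)}
def NAdj (v w : ℤ × ℤ) : Prop := (w.1 - v.1, w.2 - v.2) ∈ NSteps
def ReachIn (A : Finset (ℤ × ℤ)) (s t : ℤ × ℤ) : Prop :=
  Relation.ReflTransGen (fun u v => NAdj u v ∧ v ∈ A) s t
def IsDirAnimalFrom (A : Finset (ℤ × ℤ)) (s : ℤ × ℤ) : Prop :=
  s ∈ A ∧ ∀ t ∈ A, ReachIn A s t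

/-- `A` is a directed animal, normalized (up to translation) so that its canonical
source, the leftmost site of its bottommost segment, is the origin. -/
def IsNormDirAnimal (A : Finset (ℤ × ℤ)) : Prop :=
  IsDirAnimalFrom A (0, 0) ∧ ((-1, 0) : ℤ × ℤ) ∉ A

/-- A polymer is a closed real interval `[i,j]` with integer endpoints `i < j`,
encoded by the pair of endpoints. -/
def Polymer : Type := {p : ℤ × ℤ // p.1 < p.2}

/-- The left endpoint of a polymer. -/
def Polymer.left (a : Polymer) : ℤ := a.1.1

/-- The right endpoint of a polymer. -/
def Polymer.right (a : Polymer) : ℤ := a.1.2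

/-- The length of a polymer `[i,j]` is `j - i` (a positive integer, recorded in `ℕ`). -/
def Polymer.len (a : Polymer) : ℕ := (a.1.2 - a.1.1).toNat

/-- Two polymers are concurrent if the closed intervals intersect (even in a point). -/
def Polymer.Concurrent (a b : Polymer) : Prop := a.left ≤ b.right ∧ b.left ≤ a.right

/-- One step of the commutation relation on sequences of polymers:
two adjacent non-concurrent polymers are transposed. -/
def HeapStep (L L' : List Polymer) : Prop :=
  ∃ (l₁ l₂ : List Polymer) (a b : Polymer), ¬ a.Concurrent b ∧
    L = l₁ ++ a :: b :: l₂ ∧ L' = l₁ ++ b :: a :: l₂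

/-- A heap of polymers: a finite sequence of polymers up to commutation of
adjacent non-concurrent polymers. -/
def Heap : Type := Quot HeapStep

/-- The multiset of polymers of a heap. -/
def Heap.toMultiset : Heap → Multiset Polymer :=
  Quot.lift (fun L => (L : Multiset Polymer)) (by
    rintro L L' ⟨l₁, l₂, a, b, -, rfl, rfl⟩
    exact Multiset.coe_eq_coe.mpr (List.Perm.append_left l₁ (List.Perm.swap b a l₂)))

/-- The total length of a heap: the sum of the lengths of its polymers. -/
def Heap.totalLength (H : Heap) : ℕ := (H.toMultiset.map Polymer.len).sum

/-- A polymer `a` is minimal in the heap `H` if `H` can be written `a · H'`. -/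
def Heap.IsMinimal (H : Heap) (a : Polymer) : Prop :=
  ∃ L : List Polymer, H = Quot.mk HeapStep (a :: L)

/-- A pyramid is a heap with a unique minimal polymer. -/
def Heap.IsPyramid (H : Heap) : Prop := ∃! a : Polymer, H.IsMinimal a

/-- Normalization of a pyramid up to translation: its minimal polymer has left
endpoint `0`. -/
def Heap.PyramidNormalized (H : Heap) : Prop :=
  ∃ a : Polymer, H.IsMinimal a ∧ a.left = 0

/-- The projections of the segments of the animal `A`, with their heights:
`(p, k) ∈ SegProj A` iff `{(p.left, k), …, (p.right - 1, k)}` is a maximal set of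
horizontally consecutive sites of `A`, projecting to the polymer `[p.left, p.right]`. -/
def SegProj (A : Finset (ℤ × ℤ)) : Set (Polymer × ℤ) :=
  {q | (q.1.left - 1, q.2) ∉ A ∧ (q.1.right, q.2) ∉ A ∧
       ∀ x : ℤ, q.1.left ≤ x → x < q.1.right → (x, q.2) ∈ A}

/-- `Projects A H`: the heap `H` is the projection `π(A)` of the animal `A`, i.e.
`H` is represented by the list of the projections of all segments of `A`, taken in
weakly increasing order of height. -/
def Projects (A : Finset (ℤ × ℤ)) (H : Heap) : Prop :=
  ∃ L : List (Polymer × ℤ), L.Nodup ∧ (∀ q, q ∈ L ↔ q ∈ SegProj A) ∧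
    L.Chain' (fun q q' => q.2 ≤ q'.2) ∧ H = Quot.mk HeapStep (L.map Prod.fst)

namespace ProjAux

instance : DecidableEq Polymer := fun a b =>
  decidable_of_iff (a.1 = b.1) Subtype.ext_iff.symm

instance (a b : Polymer) : Decidable (a.Concurrent b) :=
  inferInstanceAs (Decidable (_ ∧ _))

theorem Polymer.concurrent_symm {a b : Polymer} (h : a.Concurrent b) : b.Concurrent a :=
  ⟨h.2, h.1⟩

theorem Polymer.concurrent_self (a : Polymer) : a.Concurrent a :=
  ⟨le_of_lt a.2, le_of_lt a.2⟩

/-- max over earlier concurrent pairs of (height+1), as a ℕ sup. -/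
def hmaxN (p : Polymer) (s : Multiset (Polymer × ℤ)) : ℕ :=
  ((s.filter (fun q => p.Concurrent q.1)).map (fun q => q.2.toNat + 1)).sup

theorem hmaxN_zero (p : Polymer) : hmaxN p 0 = 0 := rfl

theorem le_hmaxN {p : Polymer} {s : Multiset (Polymer × ℤ)} {q : Polymer × ℤ}
    (hq : q ∈ s) (hc : p.Concurrent q.1) : q.2.toNat + 1 ≤ hmaxN p s := by
  apply Multiset.le_sup
  exact Multiset.mem_map_of_mem _ (Multiset.mem_filter.2 ⟨hq, hc⟩)

theorem hmaxN_le {p : Polymer} {s : Multiset (Polymer × ℤ)} {n : ℕ}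
    (h : ∀ q ∈ s, p.Concurrent q.1 → q.2.toNat + 1 ≤ n) : hmaxN p s ≤ n := by
  apply Multiset.sup_le.2
  intro b hb
  obtain ⟨q, hq, rfl⟩ := Multiset.mem_map.1 hb
  obtain ⟨hq1, hq2⟩ := Multiset.mem_filter.1 hq
  exact h q hq1 hq2

theorem hmaxN_eq_zero {p : Polymer} {s : Multiset (Polymer × ℤ)}
    (h : hmaxN p s = 0) : ∀ q ∈ s, ¬ p.Concurrent q.1 := by
  intro q hq hc
  have := le_hmaxN hq hc
  omega

theorem hmaxN_congr {p : Polymer} {s t : Multiset (Polymer × ℤ)}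
    (hs : ∀ q ∈ s, ¬ p.Concurrent q.1) :
    hmaxN p (s + t) = hmaxN p t := by
  unfold hmaxN
  rw [Multiset.filter_add]
  have : Multiset.filter (fun q => p.Concurrent q.1) s = 0 := by
    rw [Multiset.filter_eq_nil]
    exact hs
  rw [this, zero_add]

/-- sup attained for nonzero nat sups -/
theorem hmaxN_attained {p : Polymer} {s : Multiset (Polymer × ℤ)} {n : ℕ}
    (h : hmaxN p s = n + 1) : ∃ q ∈ s, p.Concurrent q.1 ∧ q.2.toNat = n := by
  have : ∀ m : Multiset ℕ, m.sup ≠ 0 → m.sup ∈ m := by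
    intro m
    induction m using Multiset.induction_on with
    | empty => simp
    | cons a m ih =>
      intro _
      rw [Multiset.sup_cons]
      rcases le_total a m.sup with h1 | h1
      · rw [max_eq_right h1]
        by_cases hm : m.sup = 0
        · simp [hm] at h1 ⊢; omega
        · exact Multiset.mem_cons_of_mem (ih hm)
      · rw [max_eq_left h1]; exact Multiset.mem_cons_self _ _
  have h2 := this _ (by rw [show (Multiset.map (fun q => q.2.toNat + 1) (Multiset.filter (fun q => p.Concurrent q.1) s)).sup = hmaxN p s from rfl, h]; omega)
  rw [show (Multiset.map (fun q => q.2.toNat + 1) (Multiset.filter (fun q => p.Concurrent q.1) s)).sup = hmaxN p s from rfl, h] at h2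
  obtain ⟨q, hq, hqe⟩ := Multiset.mem_map.1 h2
  obtain ⟨hq1, hq2⟩ := Multiset.mem_filter.1 hq
  exact ⟨q, hq1, hq2, by omega⟩

/-- assign falling heights, given already-placed pairs `acc`. -/
def fallFrom (acc : Multiset (Polymer × ℤ)) : List Polymer → List (Polymer × ℤ)
  | [] => []
  | p :: L => (p, (hmaxN p acc : ℤ)) :: fallFrom ((p, (hmaxN p acc : ℤ)) ::ₘ acc) L

theorem fallFrom_map_fst (acc : Multiset (Polymer × ℤ)) (L : List Polymer) :
    (fallFrom acc L).map Prod.fst = L := by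
  induction L generalizing acc with
  | nil => rfl
  | cons p L ih => simp [fallFrom, ih]

/-- groundedness of the output of fallFrom (splitting lemma). -/
theorem fallFrom_grounded (L : List Polymer) : ∀ (acc : Multiset (Polymer × ℤ))
    (M₁ : List (Polymer × ℤ)) (q : Polymer × ℤ) (M₂ : List (Polymer × ℤ)),
    fallFrom acc L = M₁ ++ q :: M₂ →
    q.2 = (hmaxN q.1 (acc + ↑M₁) : ℤ) ∧ L = M₁.map Prod.fst ++ q.1 :: M₂.map Prod.fst := by
  induction L with
  | nil => intro acc M₁ q M₂ h; simp [fallFrom] at h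
  | cons p L ih =>
    intro acc M₁ q M₂ h
    rw [fallFrom] at h
    cases M₁ with
    | nil =>
      simp only [List.nil_append, List.cons.injEq] at h
      refine ⟨?_, ?_⟩
      · rw [← h.1]; simp
      · simp [← h.1, ← h.2, fallFrom_map_fst]
    | cons x M₁' =>
      simp only [List.cons_append, List.cons.injEq] at h
      obtain ⟨h1, h2⟩ := h
      subst h1
      obtain ⟨e1, e2⟩ := ih _ M₁' q M₂ h2
      constructor
      · rw [e1]
        congr 1
        rw [show ((((p, (hmaxN p acc : ℤ))) :: M₁' : List (Polymer × ℤ)) : Multiset (Polymer × ℤ)) = ((p, (hmaxN p acc : ℤ))) ::ₘ ↑M₁' from rfl]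
        rw [Multiset.cons_add, Multiset.add_cons]
      · simp [e2]

end ProjAux
namespace ProjAux

theorem fallFrom_heapStep {L L' : List Polymer} (h : HeapStep L L') (acc : Multiset (Polymer × ℤ)) :
    ((fallFrom acc L : List (Polymer × ℤ)) : Multiset (Polymer × ℤ)) = ↑(fallFrom acc L') := by
  obtain ⟨l₁, l₂, a, b, hab, rfl, rfl⟩ := h
  induction l₁ generalizing acc with
  | cons x l₁ ih =>
    simp only [List.cons_append, fallFrom]
    rw [← Multiset.cons_coe, ← Multiset.cons_coe]
    exact congrArg _ (ih _)
  | nil =>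
    simp only [List.nil_append, fallFrom]
    have hba : ¬ b.Concurrent a := fun hc => hab (Polymer.concurrent_symm hc)
    set ha : ℤ := (hmaxN a acc : ℤ) with hha
    set hb : ℤ := (hmaxN b acc : ℤ) with hhb
    have e1 : hmaxN b ((a, ha) ::ₘ acc) = hmaxN b acc := by
      rw [show (a, ha) ::ₘ acc = ({(a, ha)} : Multiset _) + acc by simp]
      exact hmaxN_congr (by intro q hq; rw [Multiset.mem_singleton] at hq; subst hq; exact hba)
    have e2 : hmaxN a ((b, hb) ::ₘ acc) = hmaxN a acc := by
      rw [show (b, hb) ::ₘ acc = ({(b, hb)} : Multiset _) + acc by simp]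
      exact hmaxN_congr (by intro q hq; rw [Multiset.mem_singleton] at hq; subst hq; exact hab)
    rw [e1, e2]
    have e3 : ((b, hb) ::ₘ ((a, ha) ::ₘ acc)) = ((a, ha) ::ₘ ((b, hb) ::ₘ acc)) :=
      Multiset.cons_swap _ _ _
    rw [show fallFrom ((b,hb) ::ₘ (a,ha) ::ₘ acc) l₂ = fallFrom ((a,ha) ::ₘ (b,hb) ::ₘ acc) l₂ by rw [e3]]
    rw [← Multiset.cons_coe, ← Multiset.cons_coe, ← Multiset.cons_coe, ← Multiset.cons_coe]
    exact Multiset.cons_swap _ _ _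

/-- the multiset of (polymer, falling height) pairs of a heap (with initial placement acc). -/
def FallMS (acc : Multiset (Polymer × ℤ)) : Heap → Multiset (Polymer × ℤ) :=
  Quot.lift (fun L => ↑(fallFrom acc L)) (fun _ _ h => fallFrom_heapStep h acc)

theorem FallMS_mk (acc : Multiset (Polymer × ℤ)) (L : List Polymer) :
    FallMS acc (Quot.mk HeapStep L) = ↑(fallFrom acc L) := rfl

/-- congruence of heap equality under cons -/
theorem heap_cons_congr (a : Polymer) {L L' : List Polymer}
    (h : Quot.mk HeapStep L = Quot.mk HeapStep L') :
    Quot.mk HeapStep (a :: L) = Quot.mk HeapStep (a :: L') := by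
  have h2 := Quot.eqvGen_exact h
  clear h
  induction h2 with
  | rel x y hxy =>
    apply Quot.sound
    obtain ⟨l₁, l₂, c, d, hcd, rfl, rfl⟩ := hxy
    exact ⟨a :: l₁, l₂, c, d, hcd, rfl, rfl⟩
  | refl x => rfl
  | symm x y _ ih => exact ih.symm
  | trans x y z _ _ ih1 ih2 => exact ih1.trans ih2

/-- bubbling an element past non-concurrent predecessors -/
theorem heap_bubble (p : Polymer) : ∀ (l₁ l₂ : List Polymer),
    (∀ a ∈ l₁, ¬ p.Concurrent a) →
    Quot.mk HeapStep (l₁ ++ p :: l₂) = Quot.mk HeapStep (p :: (l₁ ++ l₂)) := by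
  intro l₁
  induction l₁ with
  | nil => intro l₂ _; rfl
  | cons a l₁ ih =>
    intro l₂ hnc
    have step1 : Quot.mk HeapStep (a :: (l₁ ++ p :: l₂)) = Quot.mk HeapStep (a :: p :: (l₁ ++ l₂)) :=
      heap_cons_congr a (ih l₂ (fun x hx => hnc x (List.mem_cons_of_mem a hx)))
    have step2 : Quot.mk HeapStep (a :: p :: (l₁ ++ l₂)) = Quot.mk HeapStep (p :: a :: (l₁ ++ l₂)) := by
      apply Quot.sound
      refine ⟨[], l₁ ++ l₂, a, p, ?_, rfl, rfl⟩
      intro hc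
      exact hnc a (List.mem_cons_self) (Polymer.concurrent_symm hc)
    rw [List.cons_append]
    exact step1.trans step2

theorem fallFrom_heights_nonneg {acc : Multiset (Polymer × ℤ)} {L : List Polymer}
    {q : Polymer × ℤ} (hq : q ∈ fallFrom acc L) : 0 ≤ q.2 := by
  obtain ⟨M₁, M₂, hsplit⟩ := List.append_of_mem hq
  have := (fallFrom_grounded L acc M₁ q M₂ hsplit).1
  rw [this]
  exact Int.ofNat_nonneg _

/-- characterization of minimality -/
theorem isMinimal_iff {H : Heap} {p : Polymer} :
    H.IsMinimal p ↔ (p, (0 : ℤ)) ∈ FallMS 0 H := by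
  constructor
  · rintro ⟨L, rfl⟩
    rw [FallMS_mk]
    simp [fallFrom, hmaxN_zero]
  · intro hmem
    obtain ⟨L, rfl⟩ := Quot.exists_rep H
    rw [FallMS_mk, Multiset.mem_coe] at hmem
    obtain ⟨M₁, M₂, hsplit⟩ := List.append_of_mem hmem
    obtain ⟨h1, h2⟩ := fallFrom_grounded L 0 M₁ (p, 0) M₂ hsplit
    simp only at h1
    rw [zero_add] at h1
    have hz : hmaxN p ((M₁ : List (Polymer × ℤ)) : Multiset (Polymer × ℤ)) = 0 := by omega
    have hnc : ∀ a ∈ M₁.map Prod.fst, ¬ p.Concurrent a := by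
      intro a ha hc
      obtain ⟨q, hq, rfl⟩ := List.mem_map.1 ha
      exact hmaxN_eq_zero hz q (Multiset.mem_coe.2 hq) hc
    refine ⟨M₁.map Prod.fst ++ M₂.map Prod.fst, ?_⟩
    rw [h2]
    exact heap_bubble p _ _ hnc

end ProjAux
namespace ProjAux

/-- A labeled list is grounded relative to `acc` if each height is computed by the falling rule. -/
def GroundedFrom (acc : Multiset (Polymer × ℤ)) (M : List (Polymer × ℤ)) : Prop :=
  ∀ (M₁ : List (Polymer × ℤ)) (q : Polymer × ℤ) (M₂ : List (Polymer × ℤ)),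
    M = M₁ ++ q :: M₂ → q.2 = (hmaxN q.1 (acc + ↑M₁) : ℤ)

theorem groundedFrom_cons {acc : Multiset (Polymer × ℤ)} {q : Polymer × ℤ} {M : List (Polymer × ℤ)}
    (h : GroundedFrom acc (q :: M)) :
    q.2 = (hmaxN q.1 acc : ℤ) ∧ GroundedFrom (q ::ₘ acc) M := by
  constructor
  · have := h [] q M rfl
    simpa using this
  · intro M₁ r M₂ hsplit
    have := h (q :: M₁) r M₂ (by rw [hsplit]; rfl)
    rw [this]
    congr 1
    rw [show ((q :: M₁ : List (Polymer × ℤ)) : Multiset (Polymer × ℤ)) = q ::ₘ ↑M₁ from (Multiset.cons_coe q M₁).symm]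
    rw [Multiset.add_cons, Multiset.cons_add]

/-- lemma V: fallFrom reproduces a grounded list. -/
theorem fallFrom_of_grounded : ∀ (M : List (Polymer × ℤ)) (acc : Multiset (Polymer × ℤ)),
    GroundedFrom acc M → fallFrom acc (M.map Prod.fst) = M := by
  intro M
  induction M with
  | nil => intro acc _; rfl
  | cons q M ih =>
    intro acc h
    obtain ⟨h1, h2⟩ := groundedFrom_cons h
    simp only [List.map_cons, fallFrom]
    have hq : (q.1, (hmaxN q.1 acc : ℤ)) = q := by
      rw [← h1]
    rw [hq]
    rw [ih _ h2]

/-- Pairwise property: a later pair concurrent with an earlier one is strictly higher. -/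
theorem fallFrom_pairwise : ∀ (L : List Polymer) (acc : Multiset (Polymer × ℤ)),
    (fallFrom acc L).Pairwise (fun q q' => q'.1.Concurrent q.1 → q.2 < q'.2) := by
  intro L
  induction L with
  | nil => intro acc; exact List.Pairwise.nil
  | cons p L ih =>
    intro acc
    rw [fallFrom]
    refine List.Pairwise.cons ?_ (ih _)
    intro q hq hc
    obtain ⟨M₁, M₂, hsplit⟩ := List.append_of_mem hq
    have hg := (fallFrom_grounded L _ M₁ q M₂ hsplit).1
    have hle : (hmaxN p acc : ℤ).toNat + 1 ≤ hmaxN q.1 ((p, (hmaxN p acc : ℤ)) ::ₘ acc + ↑M₁) := by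
      apply le_hmaxN _ hc
      rw [Multiset.cons_add]
      exact Multiset.mem_cons_self _ _
    rw [hg]
    simp only [Int.toNat_natCast] at hle ⊢
    omega

theorem pairwise_same_height_not_concurrent {L : List Polymer} {acc : Multiset (Polymer × ℤ)} :
    (fallFrom acc L).Pairwise (fun q q' => q.2 = q'.2 → ¬ q.1.Concurrent q'.1) := by
  apply List.Pairwise.imp ?_ (fallFrom_pairwise L acc)
  intro q q' h heq hc
  have := h (Polymer.concurrent_symm hc)
  omega

theorem fallFrom_nodup (L : List Polymer) (acc : Multiset (Polymer × ℤ)) :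
    (fallFrom acc L).Nodup := by
  apply List.Pairwise.imp ?_ (fallFrom_pairwise L acc)
  intro q q' h heq
  subst heq
  have := h (Polymer.concurrent_self q.1)
  omega

/-- main transfer lemma: if the fall-pairs of `L` form the multiset of a sorted grounded
labeled list `M'`, then `L` and `M'.map fst` represent the same heap. -/
theorem heap_transfer : ∀ (M' : List (Polymer × ℤ)) (acc : Multiset (Polymer × ℤ)) (L : List Polymer),
    M'.Pairwise (fun q q' => q.2 ≤ q'.2) → GroundedFrom acc M' →
    ((fallFrom acc L : List (Polymer × ℤ)) : Multiset (Polymer × ℤ)) = ↑M' →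
    Quot.mk HeapStep L = Quot.mk HeapStep (M'.map Prod.fst) := by
  intro M'
  induction M' with
  | nil =>
    intro acc L _ _ hms
    have hlen : (fallFrom acc L).length = 0 := by simpa using congrArg Multiset.card hms
    have : fallFrom acc L = [] := List.eq_nil_of_length_eq_zero hlen
    have hL := fallFrom_map_fst acc L
    rw [this] at hL
    rw [← hL]
  | cons q M'' ih =>
    intro acc L hsort hgr hms
    -- q occurs in fallFrom acc L
    have hqmem : q ∈ fallFrom acc L := by
      rw [← Multiset.mem_coe, hms, ← Multiset.cons_coe]
      exact Multiset.mem_cons_self _ _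
    obtain ⟨P₁, P₂, hsplit⟩ := List.append_of_mem hqmem
    obtain ⟨hgq, hLsplit⟩ := fallFrom_grounded L acc P₁ q P₂ hsplit
    -- all pairs in P₁ are non-concurrent with q.1
    have hminq : ∀ x ∈ fallFrom acc L, q.2 ≤ x.2 := by
      intro x hx
      rw [← Multiset.mem_coe, hms, ← Multiset.cons_coe, Multiset.mem_cons] at hx
      rcases hx with rfl | hx
      · exact le_refl _
      · exact List.rel_of_pairwise_cons hsort (Multiset.mem_coe.1 hx)
    have hnc : ∀ x ∈ P₁, ¬ q.1.Concurrent x.1 := by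
      intro x hx hc
      have hx' : x ∈ fallFrom acc L := by rw [hsplit]; exact List.mem_append_left _ hx
      have hxnn : 0 ≤ x.2 := fallFrom_heights_nonneg hx'
      have h1 : x.2.toNat + 1 ≤ hmaxN q.1 (acc + ↑P₁) := le_hmaxN (by
        rw [Multiset.mem_add]; right; exact Multiset.mem_coe.2 hx) hc
      have h2 := hminq x hx'
      rw [hgq] at h2
      omega
    -- bubble q.1 to the front of L
    have hncL : ∀ a ∈ P₁.map Prod.fst, ¬ q.1.Concurrent a := by
      intro a ha hc
      obtain ⟨x, hx, rfl⟩ := List.mem_map.1 ha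
      exact hnc x hx hc
    have hbub : Quot.mk HeapStep L = Quot.mk HeapStep (q.1 :: (P₁.map Prod.fst ++ P₂.map Prod.fst)) := by
      rw [hLsplit]
      exact heap_bubble q.1 _ _ hncL
    -- heights: head of fallFrom acc (q.1 :: rest) is q
    have hhead : hmaxN q.1 acc = hmaxN q.1 (acc + ↑P₁) := by
      rw [show acc + (↑P₁ : Multiset (Polymer × ℤ)) = ↑P₁ + acc from add_comm _ _]
      exact (hmaxN_congr (fun x hx => hnc x (Multiset.mem_coe.1 hx))).symm
    obtain ⟨hq1, hq2⟩ := groundedFrom_cons hgr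
    -- multiset of tail
    have hms2 : ((fallFrom (q ::ₘ acc) (P₁.map Prod.fst ++ P₂.map Prod.fst) : List (Polymer × ℤ)) : Multiset (Polymer × ℤ)) = ↑M'' := by
      have hinv : ((fallFrom acc L : List _) : Multiset (Polymer × ℤ)) =
          ↑(fallFrom acc (q.1 :: (P₁.map Prod.fst ++ P₂.map Prod.fst))) := by
        have := congrArg (FallMS acc) hbub
        rw [FallMS_mk, FallMS_mk] at this
        exact this
      rw [hms] at hinv
      rw [fallFrom] at hinv
      have hqq : (q.1, (hmaxN q.1 acc : ℤ)) = q := by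
        apply Prod.ext
        · rfl
        · rw [← hhead] at hgq; exact hgq.symm
      rw [hqq] at hinv
      rw [← Multiset.cons_coe] at hinv
      exact (Multiset.cons_inj_right q).1 hinv.symm
    have hrec := ih (q ::ₘ acc) (P₁.map Prod.fst ++ P₂.map Prod.fst)
      (List.Pairwise.sublist (List.sublist_cons_self q M'') hsort) hq2 hms2
    rw [hbub, List.map_cons]
    exact heap_cons_congr q.1 hrec

end ProjAux
namespace ProjAux

noncomputable def segF (q : Polymer × ℤ) : Finset (ℤ × ℤ) :=
  (Finset.Ico q.1.left q.1.right).image (fun x => (x, q.2))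

theorem mem_segF {q : Polymer × ℤ} {v : ℤ × ℤ} :
    v ∈ segF q ↔ q.1.left ≤ v.1 ∧ v.1 < q.1.right ∧ v.2 = q.2 := by
  unfold segF
  simp only [Finset.mem_image, Finset.mem_Ico]
  constructor
  · rintro ⟨x, ⟨h1, h2⟩, rfl⟩; exact ⟨h1, h2, rfl⟩
  · rintro ⟨h1, h2, h3⟩; exact ⟨v.1, ⟨h1, h2⟩, by rw [← h3]⟩

noncomputable def sitesOf (M : List (Polymer × ℤ)) : Finset (ℤ × ℤ) :=
  M.foldr (fun q s => segF q ∪ s) ∅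

theorem mem_sitesOf {M : List (Polymer × ℤ)} {v : ℤ × ℤ} :
    v ∈ sitesOf M ↔ ∃ q ∈ M, v ∈ segF q := by
  induction M with
  | nil => simp [sitesOf]
  | cons q M ih =>
    simp only [sitesOf, List.foldr_cons, Finset.mem_union, List.mem_cons]
    rw [show (List.foldr (fun q s => segF q ∪ s) ∅ M) = sitesOf M from rfl, ih]
    constructor
    · rintro (h | ⟨r, hr, hv⟩)
      · exact ⟨q, Or.inl rfl, h⟩
      · exact ⟨r, Or.inr hr, hv⟩
    · rintro ⟨r, (rfl | hr), hv⟩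
      · exact Or.inl hv
      · exact Or.inr ⟨r, hr, hv⟩

theorem nadj_of_step {v w : ℤ × ℤ}
    (h : (w.1 - v.1 = 1 ∨ w.1 - v.1 = -1) ∧ w.2 = v.2 ∨
         (w.1 - v.1 = 1 ∨ w.1 - v.1 = 0 ∨ w.1 - v.1 = -1) ∧ w.2 - v.2 = 1) : NAdj v w := by
  unfold NAdj NSteps
  simp only [Set.mem_insert_iff, Set.mem_singleton_iff, Prod.mk.injEq]
  omega

theorem reach_row {A : Finset (ℤ × ℤ)} {k l r : ℤ}
    (hrow : ∀ x, l ≤ x → x < r → (x, k) ∈ A) :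
    ∀ (d : ℕ) (a b : ℤ), l ≤ a → a < r → l ≤ b → b < r → (b - a).natAbs ≤ d →
    ReachIn A (a, k) (b, k) := by
  intro d
  induction d with
  | zero =>
    intro a b _ _ _ _ hd
    have : a = b := by omega
    subst this; exact Relation.ReflTransGen.refl
  | succ d ih =>
    intro a b ha1 ha2 hb1 hb2 hd
    rcases lt_trichotomy a b with h | h | h
    · refine Relation.ReflTransGen.head ⟨nadj_of_step ?_, hrow (a+1) (by omega) (by omega)⟩
        (ih (a+1) b (by omega) (by omega) hb1 hb2 (by omega))
      left; constructor; · left; omega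
      · rfl
    · subst h; exact Relation.ReflTransGen.refl
    · refine Relation.ReflTransGen.head ⟨nadj_of_step ?_, hrow (a-1) (by omega) (by omega)⟩
        (ih (a-1) b (by omega) (by omega) hb1 hb2 (by omega))
      left; constructor; · right; omega
      · rfl

theorem segF_subset_sitesOf {M : List (Polymer × ℤ)} {q : Polymer × ℤ} (hq : q ∈ M) :
    segF q ⊆ sitesOf M := fun v hv => mem_sitesOf.2 ⟨q, hq, hv⟩

theorem row_of_pair {M : List (Polymer × ℤ)} {q : Polymer × ℤ} (hq : q ∈ M) :
    ∀ x, q.1.left ≤ x → x < q.1.right → (x, q.2) ∈ sitesOf M := by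
  intro x h1 h2
  exact segF_subset_sitesOf hq (mem_segF.2 ⟨h1, h2, rfl⟩)

/-- geometric selection of an adjacent pair of sites in two concurrent segments -/
theorem concurrent_adjacent {l r l' r' : ℤ} (hlr : l < r) (hlr' : l' < r')
    (hc1 : l ≤ r') (hc2 : l' ≤ r) :
    ∃ x' x'' : ℤ, l' ≤ x' ∧ x' < r' ∧ l ≤ x'' ∧ x'' < r ∧
      (x'' - x' = 1 ∨ x'' - x' = 0 ∨ x'' - x' = -1) := by
  refine ⟨max l' (min (r'-1) l), max l (min (r-1) (max l' (min (r'-1) l))), by omega⟩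

theorem reconstruct_reach {M : List (Polymer × ℤ)}
    (hbot : ∀ q ∈ M, q.2 = 0 → q.1.left = 0)
    (hnn : ∀ q ∈ M, 0 ≤ q.2)
    (hsup : ∀ q ∈ M, 0 < q.2 → ∃ q' ∈ M, q'.2 = q.2 - 1 ∧ q.1.Concurrent q'.1) :
    ∀ q ∈ M, ∀ x, q.1.left ≤ x → x < q.1.right → ReachIn (sitesOf M) (0, 0) (x, q.2) := by
  have main : ∀ n : ℕ, ∀ q ∈ M, q.2.toNat ≤ n → ∀ x, q.1.left ≤ x → x < q.1.right →
      ReachIn (sitesOf M) (0, 0) (x, q.2) := by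
    intro n
    induction n with
    | zero =>
      intro q hq hn x hx1 hx2
      have h0 : q.2 = 0 := by have := hnn q hq; omega
      have hl : q.1.left = 0 := hbot q hq h0
      rw [h0]
      have := reach_row (k := (0:ℤ)) (l := q.1.left) (r := q.1.right)
        (fun y hy1 hy2 => by rw [← h0]; exact row_of_pair hq y hy1 hy2)
        (x - q.1.left).natAbs q.1.left x (le_refl _) q.1.2 hx1 hx2 (le_refl _)
      rw [hl] at this
      exact this
    | succ n ih =>
      intro q hq hn x hx1 hx2
      by_cases h0 : q.2 = 0
      · exact ih q hq (by omega) x hx1 hx2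
      · have hpos : 0 < q.2 := by have := hnn q hq; omega
        obtain ⟨q', hq', hh', hcon⟩ := hsup q hq hpos
        obtain ⟨x', x'', hx'1, hx'2, hx''1, hx''2, hdiff⟩ :=
          concurrent_adjacent q.1.2 q'.1.2 hcon.1 hcon.2
        have hreach' : ReachIn (sitesOf M) (0, 0) (x', q'.2) := by
          apply ih q' hq' (by have := hnn q' hq'; omega) x' hx'1 hx'2
        have hstep : ReachIn (sitesOf M) (x', q'.2) (x'', q.2) := by
          apply Relation.ReflTransGen.single
          refine ⟨nadj_of_step ?_, row_of_pair hq x'' hx''1 hx''2⟩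
          right; constructor
          · omega
          · simp only; omega
        have hrow : ReachIn (sitesOf M) (x'', q.2) (x, q.2) := by
          apply reach_row (fun y hy1 hy2 => row_of_pair hq y hy1 hy2)
            (x - x'').natAbs x'' x hx''1 hx''2 hx1 hx2 (le_refl _)
        exact (hreach'.trans hstep).trans hrow
  intro q hq
  exact main q.2.toNat q hq (le_refl _)

theorem reconstruct_norm {M : List (Polymer × ℤ)}
    (hne : ∃ q ∈ M, q.2 = 0)
    (hbot : ∀ q ∈ M, q.2 = 0 → q.1.left = 0)
    (hnn : ∀ q ∈ M, 0 ≤ q.2)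
    (hsup : ∀ q ∈ M, 0 < q.2 → ∃ q' ∈ M, q'.2 = q.2 - 1 ∧ q.1.Concurrent q'.1) :
    IsNormDirAnimal (sitesOf M) := by
  obtain ⟨q₀, hq₀, hq₀0⟩ := hne
  have horigin : ((0, 0) : ℤ × ℤ) ∈ sitesOf M := by
    have hl := hbot q₀ hq₀ hq₀0
    have hlt : q₀.1.left < q₀.1.right := q₀.1.2
    exact mem_sitesOf.2 ⟨q₀, hq₀, mem_segF.2 ⟨by simp only; omega, by simp only; omega, hq₀0.symm⟩⟩
  refine ⟨⟨horigin, ?_⟩, ?_⟩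
  · intro t ht
    obtain ⟨q, hq, hv⟩ := mem_sitesOf.1 ht
    obtain ⟨h1, h2, h3⟩ := mem_segF.1 hv
    have := reconstruct_reach hbot hnn hsup q hq t.1 h1 h2
    rw [← h3] at this
    rw [show t = (t.1, t.2) from rfl]
    exact this
  · intro hmem
    obtain ⟨q, hq, hv⟩ := mem_sitesOf.1 hmem
    obtain ⟨h1, h2, h3⟩ := mem_segF.1 hv
    simp only at h1 h2 h3
    have := hbot q hq h3.symm
    omega

end ProjAux
namespace ProjAux

theorem _root_.Polymer.left_lt_right (a : Polymer) : a.left < a.right := a.2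

/-- symmetric pairwise consequence -/
theorem pairwise_forall {M : List (Polymer × ℤ)}
    (hpw : M.Pairwise (fun q q' => q.2 = q'.2 → ¬ q.1.Concurrent q'.1)) :
    ∀ q ∈ M, ∀ q' ∈ M, q ≠ q' → q.2 = q'.2 → ¬ q.1.Concurrent q'.1 := by
  have hs : Std.Symm (fun (q q' : Polymer × ℤ) => q.2 = q'.2 → ¬ q.1.Concurrent q'.1) := by
    constructor; intro q q' h he hc
    exact h he.symm (Polymer.concurrent_symm hc)
  intro q hq q' hq' hne
  exact List.Pairwise.forall hpw hq hq' hne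

theorem segF_disjoint {q q' : Polymer × ℤ} (h : q.2 = q'.2 → ¬ q.1.Concurrent q'.1) :
    Disjoint (segF q) (segF q') := by
  rw [Finset.disjoint_left]
  intro v hv hv'
  obtain ⟨h1, h2, h3⟩ := mem_segF.1 hv
  obtain ⟨h1', h2', h3'⟩ := mem_segF.1 hv'
  have heq : q.2 = q'.2 := by omega
  apply h heq
  exact ⟨by omega, by omega⟩

theorem card_segF (q : Polymer × ℤ) : (segF q).card = q.1.len := by
  unfold segF Polymer.len
  rw [Finset.card_image_of_injective _ (fun a b hab => by
    simpa using congrArg Prod.fst hab)]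
  exact Int.card_Ico _ _

theorem card_sitesOf {M : List (Polymer × ℤ)}
    (hpw : M.Pairwise (fun q q' => q.2 = q'.2 → ¬ q.1.Concurrent q'.1)) :
    (sitesOf M).card = (M.map (fun q => q.1.len)).sum := by
  induction M with
  | nil => rfl
  | cons q M ih =>
    rw [List.pairwise_cons] at hpw
    have hd : Disjoint (segF q) (sitesOf M) := by
      rw [Finset.disjoint_left]
      intro v hv hv'
      obtain ⟨r, hr, hvr⟩ := mem_sitesOf.1 hv'
      have := segF_disjoint (hpw.1 r hr)
      rw [Finset.disjoint_left] at this
      exact this hv hvr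
    show (segF q ∪ sitesOf M).card = _
    rw [Finset.card_union_of_disjoint hd, card_segF, ih hpw.2, List.map_cons, List.sum_cons]

/-- the segments of the reconstructed animal are exactly the pairs of M -/
theorem segProj_sitesOf {M : List (Polymer × ℤ)}
    (hpw : M.Pairwise (fun q q' => q.2 = q'.2 → ¬ q.1.Concurrent q'.1))
    (hnd : M.Nodup) :
    ∀ q : Polymer × ℤ, q ∈ SegProj (sitesOf M) ↔ q ∈ M := by
  have hforall := pairwise_forall hpw
  intro q
  constructor
  · rintro ⟨hL, hR, hall⟩
    -- the site (q.1.left, q.2) belongs to some pair q'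
    have hmem : ((q.1.left, q.2) : ℤ × ℤ) ∈ sitesOf M :=
      hall q.1.left (le_refl _) q.1.left_lt_right
    obtain ⟨q', hq', hv⟩ := mem_sitesOf.1 hmem
    obtain ⟨h1, h2, h3⟩ := mem_segF.1 hv
    simp only at h1 h2 h3
    -- q' = q
    have hLeq : q'.1.left = q.1.left := by
      by_contra hne
      have hlt : q'.1.left < q.1.left := by omega
      -- then (q.1.left - 1, q.2) ∈ A via q'
      exact hL (by
        rw [h3]
        exact row_of_pair hq' (q.1.left - 1) (by omega) (by omega))
    have hReq : q'.1.right = q.1.right := by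
      rcases lt_trichotomy q'.1.right q.1.right with h | h | h
      · -- (q'.1.right, q.2) ∈ A, covered by some q'' touching q'
        exfalso
        have hmem2 : ((q'.1.right, q.2) : ℤ × ℤ) ∈ sitesOf M :=
          hall q'.1.right (by have := q'.1.left_lt_right; omega) h
        obtain ⟨q'', hq'', hv2⟩ := mem_sitesOf.1 hmem2
        obtain ⟨g1, g2, g3⟩ := mem_segF.1 hv2
        simp only at g1 g2 g3
        have hne : q'' ≠ q' := by
          intro he; rw [he] at g2; omega
        have hcon : q''.1.Concurrent q'.1 := by
          constructor
          · have := q'.1.left_lt_right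
            show q''.1.left ≤ q'.1.right
            omega
          · show q'.1.left ≤ q''.1.right
            have := q''.1.left_lt_right
            omega
        exact hforall q'' hq'' q' hq' hne (by omega) hcon
      · exact h
      · -- (q.1.right, q.2) ∈ A via q', contradiction with hR
        exfalso
        apply hR
        rw [h3]
        exact row_of_pair hq' q.1.right (by have := q.1.left_lt_right; omega) (by omega)
    have : q' = q := by
      apply Prod.ext
      · exact Subtype.ext (Prod.ext hLeq hReq)
      · exact h3.symm
    rw [← this]; exact hq'
  · intro hq
    refine ⟨?_, ?_, fun x hx1 hx2 => row_of_pair hq x hx1 hx2⟩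
    · intro hmem
      obtain ⟨q', hq', hv⟩ := mem_sitesOf.1 hmem
      obtain ⟨h1, h2, h3⟩ := mem_segF.1 hv
      simp only at h1 h2 h3
      have hne : q' ≠ q := by
        intro he; rw [he] at h1; omega
      apply hforall q' hq' q hq hne (by omega)
      constructor
      · show q'.1.left ≤ q.1.right
        have := q.1.left_lt_right
        omega
      · show q.1.left ≤ q'.1.right
        omega
    · intro hmem
      obtain ⟨q', hq', hv⟩ := mem_sitesOf.1 hmem
      obtain ⟨h1, h2, h3⟩ := mem_segF.1 hv
      simp only at h1 h2 h3
      have hne : q' ≠ q := by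
        intro he; rw [he] at h2; omega
      apply hforall q' hq' q hq hne (by omega)
      constructor
      · show q'.1.left ≤ q.1.right
        omega
      · show q.1.left ≤ q'.1.right
        have := q.1.left_lt_right
        omega

end ProjAux
namespace ProjAux

theorem nadj_cases {v w : ℤ × ℤ} (h : NAdj v w) :
    (w.2 = v.2 ∧ (w.1 = v.1 + 1 ∨ w.1 = v.1 - 1)) ∨
    (w.2 = v.2 + 1 ∧ (w.1 = v.1 - 1 ∨ w.1 = v.1 ∨ w.1 = v.1 + 1)) := by
  unfold NAdj NSteps at h
  simp only [Set.mem_insert_iff, Set.mem_singleton_iff, Prod.mk.injEq] at h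
  omega

theorem reach_mem {A : Finset (ℤ × ℤ)} {s t : ℤ × ℤ} (h : ReachIn A s t) (hs : s ∈ A) :
    t ∈ A := by
  induction h with
  | refl => exact hs
  | tail _ hstep ih => exact hstep.2

theorem reach_height_mono {A : Finset (ℤ × ℤ)} {s t : ℤ × ℤ} (h : ReachIn A s t) :
    s.2 ≤ t.2 := by
  induction h with
  | refl => exact le_refl _
  | tail _ hstep ih =>
    rcases nadj_cases hstep.1 with ⟨he, _⟩ | ⟨he, _⟩ <;> omega

theorem reach_same_height {A : Finset (ℤ × ℤ)} {s t : ℤ × ℤ} (h : ReachIn A s t)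
    (hs : s ∈ A) (he : s.2 = t.2) :
    ∀ x, min s.1 t.1 ≤ x → x ≤ max s.1 t.1 → (x, t.2) ∈ A := by
  induction h with
  | refl =>
    intro x h1 h2
    have : x = s.1 := by omega
    subst this
    exact hs
  | @tail v t hsv hstep ih =>
    intro x h1 h2
    have hv2 : s.2 ≤ v.2 := reach_height_mono hsv
    rcases nadj_cases hstep.1 with ⟨hd, hx⟩ | ⟨hd, _⟩
    · -- horizontal step
      have hev : s.2 = v.2 := by omega
      by_cases hcase : min s.1 v.1 ≤ x ∧ x ≤ max s.1 v.1
      · have := ih hev x hcase.1 hcase.2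
        rw [show t.2 = v.2 from by omega]
        exact this
      · have : x = t.1 := by omega
        subst this
        have ht := hstep.2
        rw [show ((t.1, t.2) : ℤ × ℤ) = t from rfl]
        exact ht
    · omega

end ProjAux
namespace ProjAux

theorem reach_support {A : Finset (ℤ × ℤ)} {s t : ℤ × ℤ} (h : ReachIn A s t)
    (hs : s ∈ A) (hgt : s.2 < t.2) :
    ∃ u w : ℤ × ℤ, u ∈ A ∧ w ∈ A ∧ w.2 + 1 = t.2 ∧ u.2 = t.2 ∧ NAdj w u ∧
      (∀ x, min u.1 t.1 ≤ x → x ≤ max u.1 t.1 → (x, t.2) ∈ A) := by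
  induction h with
  | refl => omega
  | @tail v t hsv hstep ih =>
    have hvA : v ∈ A := reach_mem hsv hs
    rcases nadj_cases hstep.1 with ⟨hd, hx⟩ | ⟨hd, hx⟩
    · -- horizontal last step
      have hgt' : s.2 < v.2 := by omega
      obtain ⟨u, w, hu, hw, hw2, hu2, hadj, hrow⟩ := ih hgt'
      refine ⟨u, w, hu, hw, by omega, by omega, hadj, ?_⟩
      intro x h1 h2
      by_cases hcase : min u.1 v.1 ≤ x ∧ x ≤ max u.1 v.1
      · have := hrow x hcase.1 hcase.2
        rw [show t.2 = v.2 from by omega]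
        exact this
      · have : x = t.1 := by omega
        subst this
        have ht := hstep.2
        rw [show ((t.1, t.2) : ℤ × ℤ) = t from rfl]
        exact ht
    · -- upward last step: u := t, w := v
      refine ⟨t, v, hstep.2, hvA, by omega, rfl, hstep.1, ?_⟩
      intro x h1 h2
      have : x = t.1 := by omega
      subst this
      rw [show ((t.1, t.2) : ℤ × ℤ) = t from rfl]
      exact hstep.2

/-- every site of a directed animal lies in a (unique) maximal segment -/
theorem exists_seg {A : Finset (ℤ × ℤ)} {t : ℤ × ℤ} (ht : t ∈ A) :
    ∃ q ∈ SegProj A, q.2 = t.2 ∧ q.1.left ≤ t.1 ∧ t.1 < q.1.right := by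
  -- bound on first coordinates
  have hne : (A.image Prod.fst).Nonempty := ⟨t.1, Finset.mem_image_of_mem _ ht⟩
  have hbdd : ∃ bU bL : ℤ, ∀ v ∈ A, v.1 ≤ bU ∧ bL ≤ v.1 := by
    refine ⟨(A.image Prod.fst).max' hne, (A.image Prod.fst).min' hne, fun v hv => ?_⟩
    exact ⟨Finset.le_max' _ _ (Finset.mem_image_of_mem _ hv),
      Finset.min'_le _ _ (Finset.mem_image_of_mem _ hv)⟩
  obtain ⟨bU, bL, hb⟩ := hbdd
  -- least right end
  obtain ⟨r, ⟨hr1, hr2⟩, hr3⟩ := Int.exists_least_of_bdd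
    (P := fun x => t.1 < x ∧ (x, t.2) ∉ A)
    ⟨t.1 + 1, fun z hz => hz.1⟩
    ⟨bU + 1, by
      constructor
      · have := (hb t ht).1; omega
      · intro hmem
        have h : bU + 1 ≤ bU := (hb _ hmem).1
        omega⟩
  -- greatest before left end
  obtain ⟨l', ⟨hl1, hl2⟩, hl3⟩ := Int.exists_greatest_of_bdd
    (P := fun x => x < t.1 ∧ (x, t.2) ∉ A)
    ⟨t.1 - 1, fun z hz => by omega⟩
    ⟨bL - 1, by
      constructor
      · have := (hb t ht).2; omega
      · intro hmem
        have h : bL ≤ bL - 1 := (hb _ hmem).2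
        omega⟩
  have hlr : l' + 1 < r := by
    rcases lt_trichotomy (l' + 1) r with h | h | h
    · exact h
    · exfalso; omega
    · exfalso; omega
  refine ⟨(⟨(l' + 1, r), hlr⟩, t.2), ⟨?_, ?_, ?_⟩, rfl, by simpa [Polymer.left] using hl1, hr1⟩
  · show ((l' + 1 - 1, t.2) : ℤ × ℤ) ∉ A
    simpa using hl2
  · exact hr2
  · intro x hx1 hx2
    simp only [Polymer.left, Polymer.right] at hx1 hx2
    by_contra hmem
    rcases lt_trichotomy x t.1 with h | h | h
    · have := hl3 x ⟨h, hmem⟩; omega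
    · subst h; exact hmem ht
    · have := hr3 x ⟨h, hmem⟩; omega

end ProjAux
namespace ProjAux

/-- same-height concurrent segments are equal (no directedness needed) -/
theorem segProj_eq_of_concurrent {A : Finset (ℤ × ℤ)} {q q' : Polymer × ℤ}
    (hq : q ∈ SegProj A) (hq' : q' ∈ SegProj A) (hh : q.2 = q'.2)
    (hc : q.1.Concurrent q'.1) : q = q' := by
  obtain ⟨hL, hR, hall⟩ := hq
  obtain ⟨hL', hR', hall'⟩ := hq'
  obtain ⟨hc1, hc2⟩ := hc
  have hl := q.1.left_lt_right
  have hl' := q'.1.left_lt_right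
  have hLeq : q.1.left = q'.1.left := by
    rcases lt_trichotomy q.1.left q'.1.left with h | h | h
    · exfalso
      apply hL'
      rw [← hh]
      exact hall (q'.1.left - 1) (by omega) (by
        show q'.1.left - 1 < q.1.right
        have : q'.1.left ≤ q.1.right := hc2
        omega)
    · exact h
    · exfalso
      apply hL
      rw [hh]
      exact hall' (q.1.left - 1) (by omega) (by
        show q.1.left - 1 < q'.1.right
        have : q.1.left ≤ q'.1.right := hc1
        omega)
  have hReq : q.1.right = q'.1.right := by
    rcases lt_trichotomy q.1.right q'.1.right with h | h | h
    · exfalso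
      apply hR
      rw [hh]
      exact hall' q.1.right (by omega) h
    · exact h
    · exfalso
      apply hR'
      rw [← hh]
      exact hall q'.1.right (by omega) h
  exact Prod.ext (Subtype.ext (Prod.ext hLeq hReq)) hh

section Animal

variable {A : Finset (ℤ × ℤ)} (hA : IsNormDirAnimal A)

include hA

theorem animal_heights_nonneg : ∀ q ∈ SegProj A, (0 : ℤ) ≤ q.2 := by
  intro q hq
  have hmem : (q.1.left, q.2) ∈ A := hq.2.2 q.1.left (le_refl _) q.1.left_lt_right
  have := reach_height_mono (hA.1.2 _ hmem)
  simpa using this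

theorem animal_bottom_left : ∀ q ∈ SegProj A, q.2 = 0 → q.1.left = 0 := by
  intro q hq h0
  have hmem : (q.1.left, q.2) ∈ A := hq.2.2 q.1.left (le_refl _) q.1.left_lt_right
  have hreach := hA.1.2 _ hmem
  have hrow := reach_same_height hreach hA.1.1 (by simpa using h0.symm)
  rcases lt_trichotomy q.1.left 0 with h | h | h
  · exfalso
    apply hA.2
    have := hrow (-1) (by omega) (by omega)
    rw [show ((q.1.left, q.2) : ℤ × ℤ).2 = q.2 from rfl, h0] at this
    exact this
  · exact h
  · exfalso
    apply hq.1
    have := hrow (q.1.left - 1) (by omega) (by omega)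
    rw [show ((q.1.left, q.2) : ℤ × ℤ).2 = q.2 from rfl] at this
    exact this

theorem animal_support : ∀ q ∈ SegProj A, 0 < q.2 →
    ∃ q' ∈ SegProj A, q'.2 = q.2 - 1 ∧ q.1.Concurrent q'.1 := by
  intro q hq hpos
  have hl := q.1.left_lt_right
  have hmem : (q.1.left, q.2) ∈ A := hq.2.2 q.1.left (le_refl _) hl
  have hreach := hA.1.2 _ hmem
  obtain ⟨u, w, hu, hw, hw2, hu2, hadj, hrow⟩ := reach_support hreach hA.1.1 (by simpa using hpos)
  -- u is in the segment q
  simp only at hw2 hu2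
  have huseg : q.1.left ≤ u.1 ∧ u.1 < q.1.right := by
    constructor
    · by_contra hcon
      apply hq.1
      have := hrow (q.1.left - 1) (by omega) (by omega)
      exact this
    · by_contra hcon
      apply hq.2.1
      have := hrow q.1.right (by omega) (by omega)
      exact this
  -- w lies in a segment at height q.2 - 1
  obtain ⟨q', hq', hh', hlw, hrw⟩ := exists_seg hw
  refine ⟨q', hq', by omega, ?_⟩
  have hdx : w.1 = u.1 - 1 ∨ w.1 = u.1 ∨ w.1 = u.1 + 1 := by
    rcases nadj_cases hadj with ⟨hd, _⟩ | ⟨_, hx⟩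
    · omega
    · rcases hx with h | h | h <;> omega
  have hl' := q'.1.left_lt_right
  constructor
  · show q.1.left ≤ q'.1.right
    omega
  · show q'.1.left ≤ q.1.right
    omega

end Animal

end ProjAux
namespace ProjAux

theorem animal_grounded {A : Finset (ℤ × ℤ)} (hA : IsNormDirAnimal A)
    {M : List (Polymer × ℤ)} (hnd : M.Nodup)
    (hmem : ∀ q, q ∈ M ↔ q ∈ SegProj A)
    (hsort : M.Pairwise (fun q q' => q.2 ≤ q'.2)) :
    GroundedFrom 0 M := by
  intro M₁ q M₂ hsplit
  rw [zero_add]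
  subst hsplit
  have hqM : q ∈ M₁ ++ q :: M₂ := List.mem_append_right _ List.mem_cons_self
  have hqS : q ∈ SegProj A := (hmem q).1 hqM
  have hqnn : (0:ℤ) ≤ q.2 := animal_heights_nonneg hA q hqS
  have hpair := List.pairwise_append.1 hsort
  have hndq : q ∉ M₁ := by
    have := List.disjoint_of_nodup_append hnd
    intro hq1
    exact this hq1 List.mem_cons_self
  have hub : hmaxN q.1 ↑M₁ ≤ q.2.toNat := by
    apply hmaxN_le
    intro x hx hc
    rw [Multiset.mem_coe] at hx
    have hxS : x ∈ SegProj A := (hmem x).1 (List.mem_append_left _ hx)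
    have hxle : x.2 ≤ q.2 := hpair.2.2 x hx q List.mem_cons_self
    have hxne : x ≠ q := fun he => hndq (he ▸ hx)
    have hxlt : x.2 < q.2 := by
      rcases lt_or_eq_of_le hxle with h | h
      · exact h
      · exact absurd (segProj_eq_of_concurrent hqS hxS h.symm hc).symm hxne
    have hxnn : (0:ℤ) ≤ x.2 := animal_heights_nonneg hA x hxS
    omega
  have hlb : q.2.toNat ≤ hmaxN q.1 ↑M₁ := by
    rcases eq_or_lt_of_le hqnn with h | h
    · simp [← h]
    · obtain ⟨q', hq'S, hq'h, hq'c⟩ := animal_support hA q hqS h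
      have hq'M : q' ∈ M₁ ++ q :: M₂ := (hmem q').2 hq'S
      have hq'M₁ : q' ∈ M₁ := by
        rcases List.mem_append.1 hq'M with h1 | h1
        · exact h1
        · exfalso
          rcases List.mem_cons.1 h1 with h2 | h2
          · rw [h2] at hq'h; omega
          · have := (List.pairwise_cons.1 hpair.2.1).1 q' h2
            omega
      have := le_hmaxN (Multiset.mem_coe.2 hq'M₁) hq'c
      omega
  have : hmaxN q.1 ↑M₁ = q.2.toNat := le_antisymm hub hlb
  omega

def mkSeg (a b : ℤ × ℤ) : Polymer × ℤ :=
  ((⟨(a.1, max (b.1 + 1) (a.1 + 1)), by omega⟩ : Polymer), a.2)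

theorem segProj_finite (A : Finset (ℤ × ℤ)) : (SegProj A).Finite := by
  apply Set.Finite.subset (Set.Finite.image2 mkSeg A.finite_toSet A.finite_toSet)
  intro q hq
  have hl := q.1.left_lt_right
  have h1 : ((q.1.left, q.2) : ℤ × ℤ) ∈ A := hq.2.2 q.1.left (le_refl _) hl
  have h2 : ((q.1.right - 1, q.2) : ℤ × ℤ) ∈ A := hq.2.2 (q.1.right - 1) (by omega) (by omega)
  apply Set.mem_image2.2
  refine ⟨(q.1.left, q.2), h1, (q.1.right - 1, q.2), h2, ?_⟩
  unfold mkSeg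
  apply Prod.ext
  · apply Subtype.ext
    apply Prod.ext
    · rfl
    · show max (q.1.right - 1 + 1) (q.1.left + 1) = q.1.right
      omega
  · rfl

/-- existence of a sorted enumeration of the segments -/
theorem exists_seg_list (A : Finset (ℤ × ℤ)) :
    ∃ M : List (Polymer × ℤ), M.Nodup ∧ (∀ q, q ∈ M ↔ q ∈ SegProj A) ∧
      M.Pairwise (fun q q' => q.2 ≤ q'.2) := by
  obtain ⟨M₀, hnd, hmem⟩ : ∃ M₀ : List (Polymer × ℤ), M₀.Nodup ∧
      (∀ q, q ∈ M₀ ↔ q ∈ SegProj A) :=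
    ⟨(segProj_finite A).toFinset.toList, Finset.nodup_toList _,
      fun q => by rw [Finset.mem_toList, Set.Finite.mem_toFinset]⟩
  refine ⟨M₀.mergeSort (fun q q' => decide (q.2 ≤ q'.2)), ?_, ?_, ?_⟩
  · exact (List.mergeSort_perm M₀ _).symm.nodup hnd
  · intro q
    rw [← hmem q]
    exact ⟨fun h => (List.mergeSort_perm M₀ _).mem_iff.1 h,
      fun h => (List.mergeSort_perm M₀ _).mem_iff.2 h⟩
  · have := List.pairwise_mergeSort
      (le := fun (q q' : Polymer × ℤ) => decide (q.2 ≤ q'.2))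
      (fun a b c h1 h2 => by simp at h1 h2 ⊢; omega)
      (fun a b => by simp; omega) M₀
    exact this.imp (fun h => by simpa using h)

end ProjAux
namespace ProjAux

instance : IsTrans (Polymer × ℤ) (fun q q' => q.2 ≤ q'.2) := ⟨fun _ _ _ => le_trans⟩

instance : Trans (fun q q' : Polymer × ℤ => q.2 ≤ q'.2) (fun q q' : Polymer × ℤ => q.2 ≤ q'.2)
    (fun q q' : Polymer × ℤ => q.2 ≤ q'.2) := ⟨le_trans⟩

theorem pairwise_of_projList {A : Finset (ℤ × ℤ)} {M : List (Polymer × ℤ)}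
    (hnd : M.Nodup) (hmem : ∀ q, q ∈ M ↔ q ∈ SegProj A) :
    M.Pairwise (fun q q' => q.2 = q'.2 → ¬ q.1.Concurrent q'.1) := by
  apply List.Pairwise.imp_of_mem ?_ hnd
  intro a b ha hb hne heq hc
  exact hne (segProj_eq_of_concurrent ((hmem a).1 ha) ((hmem b).1 hb) heq hc)

theorem animal_eq_sitesOf {A : Finset (ℤ × ℤ)} (hA : IsNormDirAnimal A)
    {M : List (Polymer × ℤ)} (hmem : ∀ q, q ∈ M ↔ q ∈ SegProj A) :
    A = sitesOf M := by
  ext v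
  rw [mem_sitesOf]
  constructor
  · intro hv
    obtain ⟨q, hq, hh, h1, h2⟩ := exists_seg hv
    exact ⟨q, (hmem q).2 hq, mem_segF.2 ⟨h1, h2, hh.symm⟩⟩
  · rintro ⟨q, hq, hv⟩
    obtain ⟨h1, h2, h3⟩ := mem_segF.1 hv
    have := ((hmem q).1 hq).2.2 v.1 h1 h2
    rw [← h3] at this
    rw [show ((v.1, v.2) : ℤ × ℤ) = v from rfl] at this
    exact this

/-- main properties of the projection of a normalized directed animal -/
theorem projects_props {A : Finset (ℤ × ℤ)} {H : Heap} (hA : IsNormDirAnimal A)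
    (hP : Projects A H) :
    H.IsPyramid ∧ H.PyramidNormalized ∧ H.totalLength = A.card ∧
      (∀ v, v ∈ A ↔ ∃ q ∈ FallMS 0 H, v ∈ segF q) := by
  obtain ⟨M, hnd, hmem, hchain, hHeq⟩ := hP
  have hsort : M.Pairwise (fun q q' => q.2 ≤ q'.2) := List.isChain_iff_pairwise.1 hchain
  have hgr : GroundedFrom 0 M := animal_grounded hA hnd hmem hsort
  have hfall : fallFrom 0 (M.map Prod.fst) = M := fallFrom_of_grounded M 0 hgr
  have hFMS : FallMS 0 H = ↑M := by rw [hHeq, FallMS_mk, hfall]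
  have hmin : ∀ p : Polymer, H.IsMinimal p ↔ (p, (0:ℤ)) ∈ SegProj A := by
    intro p
    rw [isMinimal_iff, hFMS, Multiset.mem_coe, hmem]
  constructor
  · -- pyramid
    obtain ⟨q₀, hq₀, hh₀, _, _⟩ := exists_seg hA.1.1
    have hq₀' : (q₀.1, (0:ℤ)) ∈ SegProj A := by
      have : q₀ = (q₀.1, (0:ℤ)) := Prod.ext rfl (by simpa using hh₀)
      rw [← this]; exact hq₀
    refine ⟨q₀.1, (hmin q₀.1).2 hq₀', ?_⟩
    intro p hp
    have hpS := (hmin p).1 hp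
    have hl1 := animal_bottom_left hA (p, (0:ℤ)) hpS rfl
    have hl2 := animal_bottom_left hA (q₀.1, (0:ℤ)) hq₀' rfl
    have hc : p.Concurrent q₀.1 := by
      have e1 := p.left_lt_right
      have e2 := q₀.1.left_lt_right
      exact ⟨by simp only [Polymer.left, Polymer.right] at *; omega,
             by simp only [Polymer.left, Polymer.right] at *; omega⟩
    have := segProj_eq_of_concurrent hpS hq₀' rfl hc
    exact congrArg Prod.fst this
  refine ⟨?_, ?_, ?_⟩
  · -- normalized
    obtain ⟨q₀, hq₀, hh₀, _, _⟩ := exists_seg hA.1.1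
    have hq₀' : (q₀.1, (0:ℤ)) ∈ SegProj A := by
      have : q₀ = (q₀.1, (0:ℤ)) := Prod.ext rfl (by simpa using hh₀)
      rw [← this]; exact hq₀
    exact ⟨q₀.1, (hmin q₀.1).2 hq₀', animal_bottom_left hA (q₀.1, (0:ℤ)) hq₀' rfl⟩
  · -- total length
    have hAe := animal_eq_sitesOf hA hmem
    have hps := pairwise_of_projList hnd hmem
    rw [hAe, card_sitesOf hps, hHeq]
    show ((Heap.toMultiset (Quot.mk HeapStep (M.map Prod.fst))).map Polymer.len).sum = _
    rw [show Heap.toMultiset (Quot.mk HeapStep (M.map Prod.fst)) = ↑(M.map Prod.fst) from rfl]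
    rw [Multiset.map_coe, Multiset.sum_coe, List.map_map]
    rfl
  · -- recovery
    intro v
    rw [hFMS]
    have hAe := animal_eq_sitesOf hA hmem
    rw [hAe, mem_sitesOf]
    simp only [Multiset.mem_coe]

/-- uniqueness of the projection -/
theorem projects_unique {A : Finset (ℤ × ℤ)} {H₁ H₂ : Heap} (hA : IsNormDirAnimal A)
    (h1 : Projects A H₁) (h2 : Projects A H₂) : H₁ = H₂ := by
  obtain ⟨M₁, hnd₁, hmem₁, hchain₁, hHeq₁⟩ := h1
  obtain ⟨M₂, hnd₂, hmem₂, hchain₂, hHeq₂⟩ := h2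
  have hsort₂ : M₂.Pairwise (fun q q' => q.2 ≤ q'.2) := List.isChain_iff_pairwise.1 hchain₂
  have hgr₂ : GroundedFrom 0 M₂ := animal_grounded hA hnd₂ hmem₂ hsort₂
  have hgr₁ : GroundedFrom 0 M₁ :=
    animal_grounded hA hnd₁ hmem₁ (List.isChain_iff_pairwise.1 hchain₁)
  have hfall₁ : fallFrom 0 (M₁.map Prod.fst) = M₁ := fallFrom_of_grounded M₁ 0 hgr₁
  have hms : ((fallFrom 0 (M₁.map Prod.fst) : List (Polymer × ℤ)) : Multiset (Polymer × ℤ)) = ↑M₂ := by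
    rw [hfall₁]
    rw [Multiset.Nodup.ext (by exact hnd₁) (by exact hnd₂)]
    intro q
    rw [Multiset.mem_coe, Multiset.mem_coe, hmem₁, hmem₂]
  rw [hHeq₁, hHeq₂]
  exact heap_transfer M₂ 0 (M₁.map Prod.fst) hsort₂ hgr₂ hms

/-- existence of the projection -/
theorem projects_exists (A : Finset (ℤ × ℤ)) : ∃ H, Projects A H := by
  obtain ⟨M, hnd, hmem, hsort⟩ := exists_seg_list A
  exact ⟨Quot.mk HeapStep (M.map Prod.fst), M, hnd, hmem, hsort.isChain, rfl⟩

end ProjAux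
namespace ProjAux

theorem pyramid_realized {H : Heap} (hpyr : H.IsPyramid) (hnorm : H.PyramidNormalized) :
    ∃ A : Finset (ℤ × ℤ), IsNormDirAnimal A ∧ A.card = H.totalLength ∧ Projects A H := by
  obtain ⟨L, rfl⟩ := Quot.exists_rep H
  set M := fallFrom 0 L with hM
  have hnd : M.Nodup := fallFrom_nodup L 0
  have hpw : M.Pairwise (fun q q' => q.2 = q'.2 → ¬ q.1.Concurrent q'.1) :=
    pairwise_same_height_not_concurrent
  have hnn : ∀ q ∈ M, (0:ℤ) ≤ q.2 := fun q hq => fallFrom_heights_nonneg hq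
  obtain ⟨p, hpmin, hpuniq⟩ := hpyr
  obtain ⟨a, hamin, haleft⟩ := hnorm
  have hap : a = p := hpuniq a hamin
  have hbot : ∀ q ∈ M, q.2 = 0 → q.1.left = 0 := by
    intro q hq h0
    have hqe : q = (q.1, (0:ℤ)) := Prod.ext rfl h0
    have hmin : Heap.IsMinimal (Quot.mk HeapStep L) q.1 := by
      refine isMinimal_iff.2 ?_
      rw [FallMS_mk]
      rw [Multiset.mem_coe]
      rw [← hqe]
      exact hq
    have := hpuniq q.1 hmin
    rw [this, ← hap]
    exact haleft
  have hne : ∃ q ∈ M, q.2 = 0 := by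
    have := isMinimal_iff.1 hpmin
    rw [FallMS_mk, Multiset.mem_coe] at this
    exact ⟨(p, 0), this, rfl⟩
  have hsup : ∀ q ∈ M, 0 < q.2 → ∃ q' ∈ M, q'.2 = q.2 - 1 ∧ q.1.Concurrent q'.1 := by
    intro q hq hqpos
    obtain ⟨M₁, M₂, hsplit⟩ := List.append_of_mem hq
    have hgq := (fallFrom_grounded L 0 M₁ q M₂ hsplit).1
    rw [zero_add] at hgq
    have hmx : hmaxN q.1 ↑M₁ = (q.2.toNat - 1) + 1 := by omega
    obtain ⟨q', hq'1, hq'c, hq'h⟩ := hmaxN_attained hmx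
    rw [Multiset.mem_coe] at hq'1
    have hq'M : q' ∈ M := by rw [hsplit]; exact List.mem_append_left _ hq'1
    have := hnn q' hq'M
    exact ⟨q', hq'M, by omega, hq'c⟩
  have hA : IsNormDirAnimal (sitesOf M) := reconstruct_norm hne hbot hnn hsup
  refine ⟨sitesOf M, hA, ?_, ?_⟩
  · rw [card_sitesOf hpw]
    show _ = ((Heap.toMultiset (Quot.mk HeapStep L)).map Polymer.len).sum
    rw [show Heap.toMultiset (Quot.mk HeapStep L) = ↑L from rfl]
    rw [Multiset.map_coe, Multiset.sum_coe]
    rw [show L = M.map Prod.fst from (fallFrom_map_fst 0 L).symm, List.map_map]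
    rfl
  · obtain ⟨M_A, hndA, hmemA, hsortA⟩ := exists_seg_list (sitesOf M)
    have hseg : ∀ q, q ∈ SegProj (sitesOf M) ↔ q ∈ M := segProj_sitesOf hpw hnd
    refine ⟨M_A, hndA, hmemA, hsortA.isChain, ?_⟩
    apply heap_transfer M_A 0 L hsortA (animal_grounded hA hndA hmemA hsortA)
    rw [show fallFrom 0 L = M from rfl]
    rw [Multiset.Nodup.ext (by exact hnd) (by exact hndA)]
    intro q
    rw [Multiset.mem_coe, Multiset.mem_coe, hmemA, hseg]

end ProjAux

open ProjAux

theorem projection_bijection_directed (n : ℕ) (hn : 1 ≤ n) :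
    ∃ f : {A : Finset (ℤ × ℤ) // IsNormDirAnimal A ∧ A.card = n} →
          {H : Heap // H.IsPyramid ∧ H.PyramidNormalized ∧ H.totalLength = n},
      Function.Bijective f ∧ ∀ A, Projects A.1 (f A).1 := by
  classical
  have hproj : ∀ A : {A : Finset (ℤ × ℤ) // IsNormDirAnimal A ∧ A.card = n},
      Projects A.1 (Classical.choose (projects_exists A.1)) := fun A =>
    Classical.choose_spec (projects_exists A.1)
  refine ⟨fun A => ⟨Classical.choose (projects_exists A.1), ?_⟩, ⟨?_, ?_⟩, fun A => hproj A⟩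
  · obtain ⟨h1, h2, h3, _⟩ := projects_props A.2.1 (hproj A)
    exact ⟨h1, h2, by rw [h3, A.2.2]⟩
  · -- injective
    intro A₁ A₂ hf
    have heq : Classical.choose (projects_exists A₁.1) = Classical.choose (projects_exists A₂.1) :=
      congrArg Subtype.val hf
    apply Subtype.ext
    have r₁ := (projects_props A₁.2.1 (hproj A₁)).2.2.2
    have r₂ := (projects_props A₂.2.1 (hproj A₂)).2.2.2
    ext v
    rw [r₁ v, r₂ v, heq]
  · -- surjective
    rintro ⟨H, h1, h2, h3⟩
    obtain ⟨A, hA, hcard, hP⟩ := pyramid_realized h1 h2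
    refine ⟨⟨A, hA, by rw [hcard, h3]⟩, ?_⟩
    apply Subtype.ext
    exact projects_unique hA (hproj ⟨A, hA, by rw [hcard, h3]⟩) hP
end
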